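/- arXiv:2102.13075 — 2 statements merged into one kernel-verified Lean document; each statement's English description precedes it below -/
import Mathlib

section
/- For every upper expectation tree Q̄ there exists a global upper expectation Ē* satisfying axioms P1–P5, and Ē* is the most conservative such model: every global upper expectation Ē satisfying P1–P5 satisfies Ē(f|s) ≤ Ē*(f|s) for all global variables f: Ω → ℝ̄ and all situations s. -/
open Filter MeasureTheory Topology
open scoped ENNReal

namespace UEPaper

variable {X : Type} [Fintype X] [Nonempty X] [DecidableEq X]

/-- The set of paths: infinite sequences of states (`ω i` is the `(i+1)`-th state). -/
abbrev Path (X : Type) := ℕ → X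

/-- The prefix `ω^k` of length `k` of a path, as a list (a situation). -/
def prefixList (ω : Path X) (k : ℕ) : List X := (List.range k).map ω

/-- The cylinder event `Γ(s)` of a situation `s`. -/
def cyl (s : List X) : Set (Path X) := {ω | prefixList ω s.length = s}

/-- `f` is `n`-measurable: it depends only on the first `n` states. -/
def NMeas (n : ℕ) (f : Path X → EReal) : Prop :=
  ∀ ω ω' : Path X, prefixList ω n = prefixList ω' n → f ω = f ω'

/-- A gamble: a bounded real-valued global variable. -/
def IsGamble (f : Path X → EReal) : Prop :=
  ∃ B : ℝ, ∀ ω, -(B : EReal) ≤ f ω ∧ f ω ≤ (B : EReal)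

/-- A finitary gamble: an `n`-measurable gamble for some `n`. -/
def IsFinGamble (f : Path X → EReal) : Prop :=
  (∃ n, NMeas n f) ∧ IsGamble f

/-- An upper expectation tree: a coherent upper expectation at each situation. -/
structure UpperExpTree (X : Type) [Fintype X] [Nonempty X] where
  Q : List X → (X → ℝ) → ℝ
  le_sup : ∀ (s : List X) (f : X → ℝ), Q s f ≤ ⨆ x, f x
  subadd : ∀ (s : List X) (f g : X → ℝ), Q s (f + g) ≤ Q s f + Q s g
  pos_homog : ∀ (s : List X) (l : ℝ) (f : X → ℝ), 0 ≤ l → Q s (l • f) = l * Q s f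

/-- A (real-valued) supermartingale for the upper expectation tree `Q`. -/
def IsSupermart (Q : UpperExpTree X) (M : List X → ℝ) : Prop :=
  ∀ s : List X, Q.Q s (fun x => M (s ++ [x])) ≤ M s

/-- The game-theoretic upper expectation of a real-valued variable (used on gambles):
the infimum of `M s` over bounded-below supermartingales `M` with
`liminf_k M(ω^k) ≥ f(ω)` on `Γ(s)`. -/
noncomputable def gtG (Q : UpperExpTree X) (f : Path X → ℝ) (s : List X) : EReal :=
  sInf {a : EReal | ∃ M : List X → ℝ, IsSupermart Q M ∧ (∃ B : ℝ, ∀ t, B ≤ M t) ∧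
    (∀ ω ∈ cyl s,
      (f ω : EReal) ≤ Filter.liminf (fun k => ((M (prefixList ω k) : ℝ) : EReal)) atTop) ∧
    a = ((M s : ℝ) : EReal)}

/-- Extension to bounded-below variables, by continuity w.r.t. upper cuts:
`Ē(f|s) = lim_{c → +∞} Ē(min(f,c)|s)` (the limit of this nondecreasing net is a supremum). -/
noncomputable def gtBB (Q : UpperExpTree X) (f : Path X → EReal) (s : List X) : EReal :=
  ⨆ c : ℝ, gtG Q (fun ω => (f ω ⊓ (c : EReal)).toReal) s

/-- The game-theoretic global upper expectation `Ē_Q̄`, extended to all extended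
real variables by continuity w.r.t. lower cuts:
`Ē(f|s) = lim_{c → −∞} Ē(max(f,c)|s)` (the limit of this nonincreasing net is an infimum). -/
noncomputable def gtUE (Q : UpperExpTree X) (f : Path X → EReal) (s : List X) : EReal :=
  ⨅ c : ℝ, gtBB Q (fun ω => f ω ⊔ (c : EReal)) s

/-- A precise probability tree: a probability mass function at each situation. -/
structure PreciseTree (X : Type) [Fintype X] where
  p : List X → X → ℝ
  nonneg : ∀ (s : List X) (x : X), 0 ≤ p s x
  sum_one : ∀ s : List X, ∑ x, p s x = 1

/-- An imprecise probability tree: a nonempty closed convex set of probability mass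
functions at each situation. -/
structure ImpreciseTree (X : Type) [Fintype X] where
  sets : List X → Set (X → ℝ)
  nonempty' : ∀ s : List X, (sets s).Nonempty
  closed' : ∀ s : List X, IsClosed (sets s)
  convex' : ∀ s : List X, Convex ℝ (sets s)
  prob' : ∀ s : List X, ∀ q ∈ sets s, (∀ x, 0 ≤ q x) ∧ ∑ x, q x = 1

/-- `p ∼ 𝒫`: the precise tree `p` is compatible with the imprecise tree `P`. -/
def Compatible (p : PreciseTree X) (P : ImpreciseTree X) : Prop :=
  ∀ s : List X, p.p s ∈ P.sets s

/-- The probability `P_p(Γ(z)|s)` of the cylinder of `z` conditional on situation `s`. -/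
noncomputable def cylProb (p : List X → X → ℝ) (s z : List X) : ℝ :=
  if s.length < z.length ∧ z.take s.length = s then
    ∏ i ∈ Finset.Ico s.length z.length, p (z.take i) (z.getD i (Classical.arbitrary X))
  else if z.length ≤ s.length ∧ s.take z.length = z then 1 else 0

/-- The σ-algebra `ℱ` on paths generated by the cylinder events. -/
instance cylSigma : MeasurableSpace (Path X) :=
  MeasurableSpace.generateFrom {A | ∃ s : List X, A = cyl s}

/-- `μ` is the probability measure `P_p(·|s)` on `ℱ` determined by the tree `p`. -/
def IsTreeMeasure (p : PreciseTree X) (s : List X) (μ : Measure (Path X)) : Prop :=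
  IsProbabilityMeasure μ ∧ ∀ z : List X, μ (cyl z) = ENNReal.ofReal (cylProb p.p s z)

/-- Positive part of an extended real, in `ℝ≥0∞`. -/
noncomputable def posPart (x : EReal) : ℝ≥0∞ := if x = ⊤ then ⊤ else ENNReal.ofReal x.toReal

/-- The Lebesgue integral `∫ g dμ = ∫ g⁺ dμ − ∫ g⁻ dμ` of an extended-real variable
(well-defined, with value in `(-∞, +∞]`, for bounded-below measurable `g`). -/
noncomputable def integralE (μ : Measure (Path X)) (g : Path X → EReal) : EReal :=
  ((∫⁻ ω, posPart (g ω) ∂μ : ℝ≥0∞) : EReal) - ((∫⁻ ω, posPart (-(g ω)) ∂μ : ℝ≥0∞) : EReal)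

/-- The upper integral `Ē_p(f|s)`: infimum of integrals of bounded-below
`ℱ`-measurable variables dominating `f`. -/
noncomputable def upperInt (μ : Measure (Path X)) (f : Path X → EReal) : EReal :=
  sInf {a : EReal | ∃ g : Path X → EReal, Measurable g ∧ (∃ B : ℝ, ∀ ω, (B : EReal) ≤ g ω) ∧
    (∀ ω, f ω ≤ g ω) ∧ a = integralE μ g}

/-- The measure-theoretic global upper expectation `Ē_𝒫(f|s)`, given the assignment
`Pm` of the measures `P_p(·|s)` to precise trees: the upper envelope of the upper
integrals over all compatible precise trees. -/
noncomputable def muUE (Pm : PreciseTree X → List X → Measure (Path X))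
    (P : ImpreciseTree X) (f : Path X → EReal) (s : List X) : EReal :=
  ⨆ (p : PreciseTree X) (_ : Compatible p P), upperInt (Pm p s) f

/-- The trees `P` and `Q` agree: each `Q̄_s` is the upper envelope of the expectations
corresponding to the credal set `𝒫_s`. -/
def Agree (P : ImpreciseTree X) (Q : UpperExpTree X) : Prop :=
  ∀ (s : List X) (f : X → ℝ),
    Q.Q s f = sSup {r : ℝ | ∃ q ∈ P.sets s, r = ∑ x, f x * q x}

/-- Axioms P1–P5 for a global upper expectation `E` w.r.t. the tree `Q`. -/
structure Axioms (Q : UpperExpTree X) (E : (Path X → EReal) → List X → EReal) : Prop where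
  p1 : ∀ (f : X → ℝ) (s : List X),
    E (fun ω => ((f (ω s.length) : ℝ) : EReal)) s = ((Q.Q s f : ℝ) : EReal)
  p2 : ∀ f : Path X → EReal, IsFinGamble f → ∀ s : List X, E f s = E ((cyl s).indicator f) s
  p3 : ∀ f : Path X → EReal, IsFinGamble f → ∀ s : List X,
    E f s ≤ E (fun ω => E f (prefixList ω (s.length + 1))) s
  p4 : ∀ f g : Path X → EReal, (∀ ω, f ω ≤ g ω) → ∀ s : List X, E f s ≤ E g s
  p5 : ∀ (s : List X) (fn : ℕ → Path X → EReal) (f : Path X → EReal),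
    (∀ n, IsFinGamble (fn n)) → (∃ B : ℝ, ∀ n ω, (B : EReal) ≤ fn n ω) →
    (∀ ω, Tendsto (fun n => fn n ω) atTop (nhds (f ω))) →
    E f s ≤ limsup (fun n => E (fn n) s) atTop

/-- Upper semicontinuity of an extended-real variable on the path space. -/
def USC [TopologicalSpace X] [DiscreteTopology X] (f : Path X → EReal) : Prop :=
  ∀ a : ℝ, IsOpen {ω : Path X | f ω < (a : EReal)}

/-- An `Ω`-capacity (Dellacherie): a monotone `[0,∞]`-valued functional on nonnegative
variables, continuous along nondecreasing sequences, and continuous along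
nonincreasing sequences of nonnegative real-valued upper semicontinuous functions. -/
def IsCapacity [TopologicalSpace X] [DiscreteTopology X]
    (F : (Path X → EReal) → EReal) : Prop :=
  (∀ f : Path X → EReal, (∀ ω, 0 ≤ f ω) → 0 ≤ F f) ∧
  (∀ f g : Path X → EReal, (∀ ω, 0 ≤ f ω) → (∀ ω, 0 ≤ g ω) → (∀ ω, f ω ≤ g ω) → F f ≤ F g) ∧
  (∀ fn : ℕ → Path X → EReal, (∀ n ω, 0 ≤ fn n ω) → Monotone fn →
    Tendsto (fun n => F (fn n)) atTop (nhds (F (fun ω => ⨆ n, fn n ω)))) ∧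
  (∀ fn : ℕ → Path X → EReal, (∀ n ω, 0 ≤ fn n ω ∧ fn n ω < ⊤) → (∀ n, USC (fn n)) →
    Antitone fn →
    Tendsto (fun n => F (fn n)) atTop (nhds (F (fun ω => ⨅ n, fn n ω))))

open Classical in
/-- The metric `δ(ω,ω') = 2^{-n}`, `n` the first (1-based) index where `ω` and `ω'` differ. -/
noncomputable def delta (ω ω' : Path X) : ℝ :=
  if h : ω = ω' then 0
  else (1 / 2 : ℝ) ^ (Nat.find (Function.ne_iff.mp h) + 1)

/-- The product topology on the path space (with `X` discrete). -/
def prodTop (X : Type) : TopologicalSpace (ℕ → X) :=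
  @Pi.topologicalSpace ℕ (fun _ => X) (fun _ => ⊥)

/-! ### Auxiliary development for `stmt0` -/

set_option linter.unusedSectionVars false
set_option linter.unusedVariables false

section Aux

variable {Q : UpperExpTree X}

/-- default element -/
noncomputable def dflt (X : Type) [Nonempty X] : X := Classical.arbitrary X

section Qlemmas

lemma Q_le_of_le {t : List X} {u : X → ℝ} {a : ℝ} (h : ∀ x, u x ≤ a) : Q.Q t u ≤ a :=
  (Q.le_sup t u).trans (ciSup_le h)

lemma Q_zero (t : List X) : Q.Q t 0 = 0 := by
  have := Q.pos_homog t 0 0 le_rfl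
  simpa using this

lemma Q_neg_pair (t : List X) (u : X → ℝ) : 0 ≤ Q.Q t u + Q.Q t (-u) := by
  have h := Q.subadd t u (-u)
  simp only [add_neg_cancel] at h
  have h0 : Q.Q t 0 = 0 := Q_zero t
  linarith

lemma Q_const (t : List X) (c : ℝ) : Q.Q t (fun _ => c) = c := by
  have h1 : Q.Q t (fun _ => c) ≤ c := Q_le_of_le (fun _ => le_rfl)
  have h2 : Q.Q t (-(fun _ => c)) ≤ -c := by
    have : ∀ x : X, (-(fun _ : X => c)) x ≤ -c := fun x => le_rfl
    exact Q_le_of_le this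
  have h3 := Q_neg_pair (Q := Q) t (fun _ => c)
  linarith

lemma Q_mono {t : List X} {u v : X → ℝ} (h : ∀ x, u x ≤ v x) : Q.Q t u ≤ Q.Q t v := by
  have hsub : Q.Q t (u - v) ≤ 0 := Q_le_of_le (fun x => by
    simpa using sub_nonpos.mpr (h x))
  have h1 : Q.Q t u ≤ Q.Q t v + Q.Q t (u - v) := by
    have := Q.subadd t v (u - v)
    simpa using this
  linarith

lemma le_Q_of_le {t : List X} {u : X → ℝ} {a : ℝ} (h : ∀ x, a ≤ u x) : a ≤ Q.Q t u := by
  have : Q.Q t (fun _ => a) ≤ Q.Q t u := Q_mono h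
  rwa [Q_const] at this

end Qlemmas

section PrefixLemmas

@[simp] lemma prefixList_length (ω : Path X) (k : ℕ) : (prefixList ω k).length = k := by
  simp [prefixList]

lemma prefixList_getElem (ω : Path X) (k i : ℕ) (h : i < k) :
    (prefixList ω k)[i]'(by simpa using h) = ω i := by
  simp [prefixList]

lemma prefixList_take (ω : Path X) {j k : ℕ} (h : j ≤ k) :
    (prefixList ω k).take j = prefixList ω j := by
  apply List.ext_getElem
  · simp [h]
  · intro i h1 h2
    simp only [List.getElem_take]
    have hik : i < k := by simp at h1; omega
    have hij : i < j := by simpa using h2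
    rw [prefixList_getElem ω k i hik, prefixList_getElem ω j i hij]

/-- extension of a situation to a path -/
noncomputable def extP (z : List X) : Path X := fun i => z.getD i (dflt X)

lemma prefixList_extP_of_le (z : List X) {k : ℕ} (h : k ≤ z.length) :
    prefixList (extP z) k = z.take k := by
  apply List.ext_getElem
  · simp [h]
  · intro i h1 h2
    simp only [List.getElem_take]
    have hik : i < k := by simp at h1; omega
    rw [prefixList_getElem _ _ _ hik]
    simp only [extP]
    exact List.getD_eq_getElem z (dflt X) (by omega)

lemma prefixList_extP (z : List X) : prefixList (extP z) z.length = z := by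
  simpa using prefixList_extP_of_le z (le_refl z.length)

lemma mem_cyl_iff {ω : Path X} {z : List X} : ω ∈ cyl z ↔ prefixList ω z.length = z :=
  Iff.rfl

lemma extP_mem_cyl (z : List X) : extP z ∈ cyl z := prefixList_extP z

lemma mem_cyl_of_prefix {z z' : List X} (h : z <+: z') {ω : Path X} (hm : ω ∈ cyl z') :
    ω ∈ cyl z := by
  rcases h with ⟨r, rfl⟩
  have hz : z.length ≤ (z ++ r).length := by simp
  have := prefixList_take ω hz
  rw [mem_cyl_iff] at hm ⊢
  rw [← this, hm, List.take_left' rfl]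

lemma self_mem_cyl (ω : Path X) (k : ℕ) : ω ∈ cyl (prefixList ω k) := by
  rw [mem_cyl_iff, prefixList_length]

lemma mem_cyl_getD {ω : Path X} {z : List X} (hm : ω ∈ cyl z) {i : ℕ} (h : i < z.length)
    (d : X) : z.getD i d = ω i := by
  rw [mem_cyl_iff] at hm
  rw [← hm, List.getD_eq_getElem _ _ (by simpa using h)]
  exact prefixList_getElem ω _ i (by simpa using h)

lemma cyl_nonempty (z : List X) : (cyl z).Nonempty := ⟨extP z, extP_mem_cyl z⟩

lemma append_mem_cyl {ω : Path X} {z : List X} (hm : ω ∈ cyl (z ++ [ω z.length])) :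
    True := trivial

/-- A path in a cylinder of `z ++ [x]` has `x` at position `z.length`. -/
lemma mem_cyl_append_eq {ω : Path X} {z : List X} {x : X}
    (hm : ω ∈ cyl (z ++ [x])) : ω z.length = x := by
  have h : z.length < (z ++ [x]).length := by simp
  have h2 := mem_cyl_getD hm h (dflt X)
  rw [List.getD_eq_getElem _ _ h, List.getElem_concat_length rfl] at h2
  exact h2.symm

lemma mem_cyl_snoc {ω : Path X} {z : List X} :
    ω ∈ cyl (z ++ [ω z.length]) ↔ ω ∈ cyl z := by
  constructor
  · exact mem_cyl_of_prefix ⟨[ω z.length], rfl⟩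
  · intro h
    rw [mem_cyl_iff]
    have hl : (z ++ [ω z.length]).length = z.length + 1 := by simp
    rw [hl]
    apply List.ext_getElem
    · simp
    · intro i h1 h2
      rw [prefixList_getElem ω _ i (by simpa using h1)]
      rcases Nat.lt_or_ge i z.length with hi | hi
      · rw [List.getElem_append_left (by simpa using hi)]
        have := mem_cyl_getD h hi (dflt X)
        rw [List.getD_eq_getElem _ _ hi] at this
        exact this.symm
      · have : i = z.length := by simp at h2; omega
        subst this
        exact (List.getElem_concat_length rfl _).symm ▸ rfl

end PrefixLemmas


section EinfClamp

/-- infimum of `f` over the cylinder of `z` -/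
noncomputable def einf (f : Path X → EReal) (z : List X) : EReal := sInf (f '' cyl z)

lemma einf_le {f : Path X → EReal} {z : List X} {ω : Path X} (h : ω ∈ cyl z) :
    einf f z ≤ f ω := sInf_le ⟨ω, h, rfl⟩

lemma einf_mono {f g : Path X → EReal} {z : List X} (h : ∀ ω ∈ cyl z, f ω ≤ g ω) :
    einf f z ≤ einf g z := by
  apply le_sInf
  rintro b ⟨ω, hω, rfl⟩
  exact (einf_le hω).trans (h ω hω)

lemma le_einf {f : Path X → EReal} {z : List X} {b : EReal} (h : ∀ ω ∈ cyl z, b ≤ f ω) :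
    b ≤ einf f z := le_sInf (by rintro a ⟨ω, hω, rfl⟩; exact h ω hω)

lemma einf_congr {f g : Path X → EReal} (z : List X) (h : ∀ ω ∈ cyl z, f ω = g ω) :
    einf f z = einf g z := by
  unfold einf
  congr 1
  ext a
  constructor
  · rintro ⟨ω, hω, rfl⟩; exact ⟨ω, hω, (h ω hω).symm⟩
  · rintro ⟨ω, hω, rfl⟩; exact ⟨ω, hω, h ω hω⟩

lemma einf_const {z : List X} {f : Path X → EReal} {a : EReal}
    (h : ∀ ω ∈ cyl z, f ω = a) : einf f z = a := by
  apply le_antisymm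
  · exact (einf_le (extP_mem_cyl z)).trans_eq (h _ (extP_mem_cyl z))
  · exact le_einf (fun ω hω => (h ω hω).ge)

/-- truncation of an extended real to `[min d c, c]` -/
noncomputable def clamp (d c : ℝ) (x : EReal) : ℝ := ((x ⊔ (d : EReal)) ⊓ (c : EReal)).toReal

lemma clamp_ne_top (d c : ℝ) (x : EReal) : (x ⊔ (d : EReal)) ⊓ (c : EReal) ≠ ⊤ :=
  fun h => by simp [inf_eq_top_iff] at h
lemma clamp_ne_bot (d c : ℝ) (x : EReal) : (x ⊔ (d : EReal)) ⊓ (c : EReal) ≠ ⊥ := by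
  have h1 : (⊥ : EReal) < (x ⊔ (d : EReal)) ⊓ (c : EReal) :=
    lt_inf_iff.mpr ⟨lt_of_lt_of_le (EReal.bot_lt_coe d) le_sup_right, EReal.bot_lt_coe c⟩
  exact h1.ne' 

lemma clamp_coe_eq (d c : ℝ) (x : EReal) :
    ((clamp d c x : ℝ) : EReal) = (x ⊔ (d : EReal)) ⊓ (c : EReal) := by
  rw [clamp, EReal.coe_toReal (clamp_ne_top d c x) (clamp_ne_bot d c x)]

lemma clamp_mono (d c : ℝ) {x y : EReal} (h : x ≤ y) : clamp d c x ≤ clamp d c y := by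
  have : ((clamp d c x : ℝ) : EReal) ≤ ((clamp d c y : ℝ) : EReal) := by
    rw [clamp_coe_eq, clamp_coe_eq]
    exact inf_le_inf_right _ (sup_le_sup_right h _)
  exact_mod_cast this

lemma clamp_mono_d {d d' c : ℝ} (h : d ≤ d') (x : EReal) : clamp d c x ≤ clamp d' c x := by
  have : ((clamp d c x : ℝ) : EReal) ≤ ((clamp d' c x : ℝ) : EReal) := by
    rw [clamp_coe_eq, clamp_coe_eq]
    exact inf_le_inf_right _ (sup_le_sup_left (by exact_mod_cast h) _)
  exact_mod_cast this

lemma clamp_le_c (d c : ℝ) (x : EReal) : clamp d c x ≤ c := by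
  have : ((clamp d c x : ℝ) : EReal) ≤ ((c : ℝ) : EReal) := by
    rw [clamp_coe_eq]; exact inf_le_right
  exact_mod_cast this

lemma min_le_clamp (d c : ℝ) (x : EReal) : min d c ≤ clamp d c x := by
  have : (((min d c : ℝ)) : EReal) ≤ ((clamp d c x : ℝ) : EReal) := by
    rw [clamp_coe_eq]
    refine le_inf ?_ (by exact_mod_cast min_le_right d c)
    exact le_sup_of_le_right (by exact_mod_cast min_le_left d c)
  exact_mod_cast this

lemma clamp_of_mem {d c : ℝ} {x : EReal} (h1 : (d : EReal) ≤ x) (h2 : x ≤ (c : EReal)) :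
    ((clamp d c x : ℝ) : EReal) = x := by
  rw [clamp_coe_eq, sup_of_le_left h1, inf_of_le_left h2]

lemma clamp_coe (d c r : ℝ) : clamp d c (r : EReal) = min (max r d) c := by
  have h := clamp_coe_eq d c (r : EReal)
  have h2 : ((clamp d c (r : EReal) : ℝ) : EReal) = (((min (max r d) c : ℝ)) : EReal) := by
    rw [h]; exact_mod_cast rfl
  exact_mod_cast h2

lemma clamp_le_toReal {d c : ℝ} {x : EReal} (hd : (d : EReal) ≤ x) (hxt : x ≠ ⊤)
    (hxb : x ≠ ⊥) : clamp d c x ≤ x.toReal := by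
  have h : ((clamp d c x : ℝ) : EReal) ≤ x := by
    rw [clamp_coe_eq, sup_of_le_left hd]; exact inf_le_left
  have h2 : ((clamp d c x : ℝ) : EReal) ≤ ((x.toReal : ℝ) : EReal) := by
    rw [EReal.coe_toReal hxt hxb]; exact h
  exact_mod_cast h2

lemma clamp_tendsto {d c : ℝ} {u : ℕ → EReal} {x : EReal}
    (h : Filter.Tendsto u Filter.atTop (nhds x)) :
    Filter.Tendsto (fun n => clamp d c (u n)) Filter.atTop (nhds (clamp d c x)) := by
  have hc : Continuous (fun y : EReal => (y ⊔ (d : EReal)) ⊓ (c : EReal)) := by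
    apply Continuous.min
    · exact Continuous.max continuous_id continuous_const
    · exact continuous_const
  have h1 : Filter.Tendsto (fun n => (u n ⊔ (d : EReal)) ⊓ (c : EReal)) Filter.atTop
      (nhds ((x ⊔ (d : EReal)) ⊓ (c : EReal))) := (hc.tendsto x).comp h
  exact (EReal.tendsto_toReal (clamp_ne_top d c x) (clamp_ne_bot d c x)).comp h1

end EinfClamp

section VrecSec

variable (Q)

/-- backward recursion of depth `m` with terminal values `g` -/
noncomputable def Vrec : ℕ → (List X → ℝ) → List X → ℝ
  | 0, g, t => g t
  | (m+1), g, t => Q.Q t (fun x => Vrec m g (t ++ [x]))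

variable {Q}

lemma Vrec_congr {m : ℕ} {g g' : List X → ℝ} {t : List X}
    (h : ∀ z, t <+: z → z.length = t.length + m → g z = g' z) :
    Vrec Q m g t = Vrec Q m g' t := by
  induction m generalizing t with
  | zero => exact h t (List.prefix_refl t) (by simp)
  | succ m ih =>
    simp only [Vrec]
    congr 1
    ext x
    apply ih
    intro z hz hl
    refine h z (((t.prefix_append [x]).trans hz)) (by simp at hl ⊢; omega)

lemma Vrec_mono {m : ℕ} {g g' : List X → ℝ} {t : List X}
    (h : ∀ z, t <+: z → z.length = t.length + m → g z ≤ g' z) :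
    Vrec Q m g t ≤ Vrec Q m g' t := by
  induction m generalizing t with
  | zero => exact h t (List.prefix_refl t) (by simp)
  | succ m ih =>
    simp only [Vrec]
    apply Q_mono
    intro x
    apply ih
    intro z hz hl
    exact h z ((t.prefix_append [x]).trans hz) (by simp at hl ⊢; omega)

lemma Vrec_le_of_le {m : ℕ} {g : List X → ℝ} {t : List X} {a : ℝ}
    (h : ∀ z, t <+: z → z.length = t.length + m → g z ≤ a) :
    Vrec Q m g t ≤ a := by
  induction m generalizing t with
  | zero => exact h t (List.prefix_refl t) (by simp)
  | succ m ih =>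
    simp only [Vrec]
    apply Q_le_of_le
    intro x
    apply ih
    intro z hz hl
    exact h z ((t.prefix_append [x]).trans hz) (by simp at hl ⊢; omega)

lemma le_Vrec_of_le {m : ℕ} {g : List X → ℝ} {t : List X} {a : ℝ}
    (h : ∀ z, t <+: z → z.length = t.length + m → a ≤ g z) :
    a ≤ Vrec Q m g t := by
  induction m generalizing t with
  | zero => exact h t (List.prefix_refl t) (by simp)
  | succ m ih =>
    simp only [Vrec]
    apply le_Q_of_le
    intro x
    apply ih
    intro z hz hl
    exact h z ((t.prefix_append [x]).trans hz) (by simp at hl ⊢; omega)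

lemma Vrec_const {m : ℕ} {t : List X} {c : ℝ} : Vrec Q m (fun _ => c) t = c := by
  induction m generalizing t with
  | zero => rfl
  | succ m ih =>
    simp only [Vrec]
    simpa [ih] using Q_const (Q := Q) t c

lemma Vrec_comp {m k : ℕ} {g : List X → ℝ} {t : List X} :
    Vrec Q (m + k) g t = Vrec Q m (fun z => Vrec Q k g z) t := by
  induction m generalizing t with
  | zero => simp [Vrec]
  | succ m ih =>
    have : m + 1 + k = (m + k) + 1 := by omega
    rw [this]
    simp only [Vrec]
    congr 1
    ext x
    exact ih

/-- `W` is harmonic from `t₀` on. -/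
def Harm (Q : UpperExpTree X) (W : List X → ℝ) (t₀ : List X) : Prop :=
  ∀ z, t₀ <+: z → Q.Q z (fun x => W (z ++ [x])) = W z

lemma Vrec_harm {W : List X → ℝ} {t₀ t : List X} (hW : Harm Q W t₀) (ht : t₀ <+: t)
    (m : ℕ) : Vrec Q m (fun z => W z) t = W t := by
  induction m generalizing t with
  | zero => rfl
  | succ m ih =>
    simp only [Vrec]
    have : (fun x => Vrec Q m (fun z => W z) (t ++ [x])) = fun x => W (t ++ [x]) := by
      ext x
      exact ih (ht.trans (t.prefix_append [x]))
    rw [this]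
    exact hW t ht

end VrecSec


section Model

/-- terminal function: clamped infimum envelope -/
noncomputable def termF (f : Path X → EReal) (d c : ℝ) : List X → ℝ :=
  fun z => clamp d c (einf f z)

variable (Q)

noncomputable def innerE (f : Path X → EReal) (d : ℝ) (s : List X) : EReal :=
  ⨆ (m : ℕ) (c : ℝ), ((Vrec Q m (termF f d c) s : ℝ) : EReal)

/-- The model: a global upper expectation satisfying P1–P5. -/
noncomputable def Emod (f : Path X → EReal) (s : List X) : EReal :=
  ⨅ d : ℝ, innerE Q f d s

variable {Q}

lemma innerE_mono_d {f : Path X → EReal} {d d' : ℝ} (h : d ≤ d') (s : List X) :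
    innerE Q f d s ≤ innerE Q f d' s := by
  apply iSup₂_mono
  intro m c
  have : Vrec Q m (termF f d c) s ≤ Vrec Q m (termF f d' c) s :=
    Vrec_mono (fun z _ _ => clamp_mono_d h _)
  exact_mod_cast this

lemma Emod_mono {f g : Path X → EReal} (h : ∀ ω, f ω ≤ g ω) (s : List X) :
    Emod Q f s ≤ Emod Q g s := by
  apply iInf_mono
  intro d
  apply iSup₂_mono
  intro m c
  have : Vrec Q m (termF f d c) s ≤ Vrec Q m (termF g d c) s :=
    Vrec_mono (fun z _ _ => clamp_mono d c (einf_mono (fun ω _ => h ω)))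
  exact_mod_cast this

lemma Emod_congr_cyl {f g : Path X → EReal} {s : List X}
    (h : ∀ ω ∈ cyl s, f ω = g ω) : Emod Q f s = Emod Q g s := by
  unfold Emod innerE
  congr 1; ext d; congr 1; ext m; congr 1; ext c
  congr 1
  norm_cast
  apply Vrec_congr
  intro z hz _
  unfold termF
  rw [einf_congr z (fun ω hω => h ω (mem_cyl_of_prefix hz hω))]

/-- P2 for `Emod`. -/
lemma Emod_indicator (f : Path X → EReal) (s : List X) :
    Emod Q f s = Emod Q ((cyl s).indicator f) s :=
  Emod_congr_cyl (fun ω hω => (Set.indicator_of_mem hω f).symm)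

section FinitaryFormula

variable {f : Path X → EReal} {n : ℕ} {B : ℝ}

/-- real value of a finitary variable at a node -/
noncomputable def fval (f : Path X → EReal) (z : List X) : ℝ := (f (extP z)).toReal

/-- the canonical value process of a finitary gamble -/
noncomputable def Wproc (Q : UpperExpTree X) (f : Path X → EReal) (n : ℕ) :
    List X → ℝ := fun t => Vrec Q (n - t.length) (fval f) t

variable (hn : NMeas n f) (hB : ∀ ω, -(B : EReal) ≤ f ω ∧ f ω ≤ (B : EReal))

include hB in
lemma f_ne_top (ω : Path X) : f ω ≠ ⊤ :=
  fun h => absurd (h ▸ (hB ω).2) (by simp)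

include hB in
lemma f_ne_bot (ω : Path X) : f ω ≠ ⊥ :=
  fun h => absurd (h ▸ (hB ω).1) (by simp)

include hn hB in
lemma fval_spec {z : List X} (hz : n ≤ z.length) {ω : Path X} (hω : ω ∈ cyl z) :
    f ω = ((fval f z : ℝ) : EReal) := by
  have hpre : prefixList ω n = prefixList (extP z) n := by
    rw [← prefixList_take ω hz, mem_cyl_iff.mp hω, prefixList_extP_of_le z hz]
  have h1 : f ω = f (extP z) := hn ω (extP z) hpre
  rw [h1, fval, EReal.coe_toReal (f_ne_top hB _) (f_ne_bot hB _)]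

include hn hB in
lemma fval_stable {z z' : List X} (hz : n ≤ z.length) (hzz : z <+: z') :
    fval f z' = fval f z := by
  have h1 : f (extP z') = ((fval f z : ℝ) : EReal) :=
    fval_spec hn hB hz (mem_cyl_of_prefix hzz (extP_mem_cyl z'))
  rw [fval, h1, EReal.toReal_coe]

include hB in
lemma fval_bounds (z : List X) : -B ≤ fval f z ∧ fval f z ≤ B := by
  have h := hB (extP z)
  constructor
  · have := EReal.toReal_le_toReal h.1 (by simp) (f_ne_top hB _)
    simpa [fval] using this
  · have := EReal.toReal_le_toReal h.2 (f_ne_bot hB _) (by simp)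
    simpa [fval] using this

include hn hB in
lemma einf_finitary {z : List X} (hz : n ≤ z.length) :
    einf f z = ((fval f z : ℝ) : EReal) := by
  apply einf_const
  intro ω hω
  exact fval_spec hn hB hz hω

include hB in
lemma einf_bounds (z : List X) :
    (-B : ℝ) ≤ einf f z ∧ einf f z ≤ (B : ℝ) ∧ einf f z ≠ ⊤ ∧ einf f z ≠ ⊥ := by
  have h1 : ((-B : ℝ) : EReal) ≤ einf f z := le_einf (fun ω _ => by
    simpa using (hB ω).1)
  have h2 : einf f z ≤ ((B : ℝ) : EReal) :=
    (einf_le (extP_mem_cyl z)).trans (hB (extP z)).2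
  refine ⟨h1, h2, ?_, ?_⟩
  · exact fun h => absurd (h ▸ h2) (by simp)
  · exact fun h => absurd (h ▸ h1) (by simp)

include hn hB in
lemma Wproc_harm : Harm Q (Wproc Q f n) [] := by
  intro z _
  rcases le_or_gt n z.length with hz | hz
  · have h0 : n - z.length = 0 := by omega
    have h1 : ∀ x : X, Wproc Q f n (z ++ [x]) = fval f z := by
      intro x
      have h2 : n - (z ++ [x]).length = 0 := by simp; omega
      rw [Wproc, h2]
      exact fval_stable hn hB hz (z.prefix_append [x])
    have h3 : (fun x => Wproc Q f n (z ++ [x])) = fun _ => fval f z := funext h1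
    rw [h3, Q_const, Wproc, h0]
    rfl
  · have h0 : n - z.length = (n - (z.length + 1)) + 1 := by omega
    rw [Wproc, h0]
    simp only [Vrec]
    congr 1
    ext x
    rw [Wproc]
    congr 2
    simp

include hB in
lemma Wproc_bounds (t : List X) : -B ≤ Wproc Q f n t ∧ Wproc Q f n t ≤ B := by
  constructor
  · exact le_Vrec_of_le (fun z _ _ => (fval_bounds hB z).1)
  · exact Vrec_le_of_le (fun z _ _ => (fval_bounds hB z).2)

include hn hB in
lemma Vrec_fval_collapse {t : List X} {N : ℕ} (hN : n - t.length ≤ N) :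
    Vrec Q N (fval f) t = Wproc Q f n t := by
  have hsplit : N = (n - t.length) + (N - (n - t.length)) := by omega
  rw [hsplit, Vrec_comp, Wproc]
  apply Vrec_congr
  intro z hz hl
  have hnz : n ≤ z.length := by omega
  have h1 : Vrec Q (N - (n - t.length)) (fval f) z
      = Vrec Q (N - (n - t.length)) (fun _ => fval f z) z :=
    Vrec_congr (fun z' hz' _ => fval_stable hn hB hnz hz')
  rw [h1, Vrec_const]

include hn hB in
lemma termF_le_Wproc {d c : ℝ} (hd : d ≤ -B) (z : List X) :
    termF f d c z ≤ Wproc Q f n z := by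
  obtain ⟨hb1, hb2, hbt, hbb⟩ := einf_bounds hB z
  have hdz : (d : EReal) ≤ einf f z :=
    le_trans (by exact_mod_cast hd) hb1
  have h1 : termF f d c z ≤ (einf f z).toReal := clamp_le_toReal hdz hbt hbb
  refine h1.trans (le_Vrec_of_le ?_)
  intro z' hz' hl'
  have hnz' : n ≤ z'.length := by
    rcases le_or_gt n z.length with h | h
    · have := hz'.length_le; omega
    · omega
  have h2 : einf f z ≤ ((fval f z' : ℝ) : EReal) := by
    rw [← fval_spec hn hB hnz' (extP_mem_cyl z')]
    exact einf_le (mem_cyl_of_prefix hz' (extP_mem_cyl z'))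
  have := EReal.toReal_le_toReal h2 hbb (by simp)
  simpa using this

include hn hB in
lemma termF_eq_fval {d : ℝ} (hd : d ≤ -B) {z : List X} (hz : n ≤ z.length) :
    termF f d B z = fval f z := by
  rw [termF, einf_finitary hn hB hz, clamp_coe]
  have h1 := (fval_bounds hB z).1
  have h2 := (fval_bounds hB z).2
  rw [max_eq_left (le_trans hd h1), min_eq_left h2]

include hn hB in
lemma Emod_finitary (t : List X) : Emod Q f t = ((Wproc Q f n t : ℝ) : EReal) := by
  have key_le : ∀ d c m, d ≤ -B → Vrec Q m (termF f d c) t ≤ Wproc Q f n t := by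
    intro d c m hd
    have h1 : Vrec Q m (termF f d c) t ≤ Vrec Q m (fun z => Wproc Q f n z) t :=
      Vrec_mono (fun z _ _ => termF_le_Wproc hn hB hd z)
    rwa [Vrec_harm (Wproc_harm hn hB) t.nil_prefix m] at h1
  have key_eq : ∀ d, d ≤ -B → Vrec Q (n - t.length) (termF f d B) t = Wproc Q f n t := by
    intro d hd
    rw [Wproc]
    exact Vrec_congr (fun z hz hl => termF_eq_fval hn hB hd (by omega))
  apply le_antisymm
  · refine (iInf_le _ (-B)).trans ?_
    apply iSup₂_le
    intro m c
    exact_mod_cast key_le (-B) c m le_rfl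
  · apply le_iInf
    intro d
    rcases le_or_gt d (-B) with hd | hd
    · refine le_trans ?_ (le_iSup₂ (n - t.length) B)
      exact_mod_cast (key_eq d hd).ge
    · refine le_trans ?_ (innerE_mono_d hd.le t)
      refine le_trans ?_ (le_iSup₂ (n - t.length) B)
      exact_mod_cast (key_eq (-B) le_rfl).ge

end FinitaryFormula

/-- P1 for `Emod`. -/
lemma Emod_p1 (f : X → ℝ) (s : List X) :
    Emod Q (fun ω => ((f (ω s.length) : ℝ) : EReal)) s = ((Q.Q s f : ℝ) : EReal) := by
  set fg : Path X → EReal := fun ω => ((f (ω s.length) : ℝ) : EReal) with hfg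
  obtain ⟨B, hBs⟩ : ∃ B : ℝ, ∀ x, |f x| ≤ B :=
    ⟨Finset.univ.sup' Finset.univ_nonempty (fun x => |f x|),
      fun x => Finset.le_sup' (fun y => |f y|) (Finset.mem_univ x)⟩
  have hB : ∀ ω, -(B : EReal) ≤ fg ω ∧ fg ω ≤ (B : EReal) := by
    intro ω
    have h := abs_le.mp (hBs (ω s.length))
    simp only [hfg]
    constructor
    · show -(B : EReal) ≤ ((f (ω s.length) : ℝ) : EReal)
      exact_mod_cast h.1
    · show ((f (ω s.length) : ℝ) : EReal) ≤ (B : EReal)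
      exact_mod_cast h.2
  have hn : NMeas (s.length + 1) fg := by
    intro ω ω' h
    have : ω s.length = ω' s.length := by
      have h1 := prefixList_getElem ω (s.length + 1) s.length (by omega)
      have h2 := prefixList_getElem ω' (s.length + 1) s.length (by omega)
      rw [← h1, ← h2]
      congr 1
    simp only [hfg, this]
  rw [Emod_finitary hn hB s]
  congr 1
  have h1 : s.length + 1 - s.length = 1 := by omega
  have hW : Wproc Q fg (s.length + 1) s = Q.Q s (fun x => fval fg (s ++ [x])) := by
    unfold Wproc
    rw [h1]
    simp [Vrec]
  rw [hW]
  congr 1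
  ext x
  show fval fg (s ++ [x]) = f x
  rw [fval, hfg]
  have hx : (extP (s ++ [x])) s.length = x := mem_cyl_append_eq (extP_mem_cyl (s ++ [x]))
  simp [hx]

/-- value process of a finitary gamble, harmonic identity at `s` -/
lemma Wproc_step {f : Path X → EReal} {n : ℕ} {B : ℝ} (hn : NMeas n f)
    (hB : ∀ ω, -(B : EReal) ≤ f ω ∧ f ω ≤ (B : EReal)) (s : List X) :
    Q.Q s (fun x => Wproc Q f n (s ++ [x])) = Wproc Q f n s :=
  Wproc_harm hn hB s s.nil_prefix

/-- P3 for `Emod`. -/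
lemma Emod_p3 (f : Path X → EReal) (hf : IsFinGamble f) (s : List X) :
    Emod Q f s ≤ Emod Q (fun ω => Emod Q f (prefixList ω (s.length + 1))) s := by
  obtain ⟨⟨n, hn⟩, ⟨B, hB⟩⟩ := hf
  set F : Path X → EReal := fun ω => Emod Q f (prefixList ω (s.length + 1)) with hFdef
  have hFval : ∀ ω, F ω = ((Wproc Q f n (prefixList ω (s.length + 1)) : ℝ) : EReal) :=
    fun ω => Emod_finitary hn hB _
  have hnF : NMeas (s.length + 1) F := by
    intro ω ω' h
    simp only [hFdef, h]
  have hBF : ∀ ω, -(B : EReal) ≤ F ω ∧ F ω ≤ (B : EReal) := by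
    intro ω
    rw [hFval ω]
    have h := Wproc_bounds (Q := Q) (n := n) hB (prefixList ω (s.length + 1))
    constructor
    · exact_mod_cast h.1
    · exact_mod_cast h.2
  rw [Emod_finitary hn hB s, Emod_finitary hnF hBF s]
  apply le_of_eq
  congr 1
  have h1 : s.length + 1 - s.length = 1 := by omega
  have hWF : Wproc Q F (s.length + 1) s = Q.Q s (fun x => fval F (s ++ [x])) := by
    unfold Wproc
    rw [h1]
    simp [Vrec]
  rw [hWF, ← Wproc_step hn hB s]
  congr 1
  ext x
  show Wproc Q f n (s ++ [x]) = fval F (s ++ [x])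
  rw [fval, hFval]
  have h2 : prefixList (extP (s ++ [x])) (s.length + 1) = s ++ [x] := by
    have := prefixList_extP (s ++ [x])
    simpa using this
  rw [h2, EReal.toReal_coe]

end Model


section Credal

/-- Hahn–Banach: existence of a compatible mass function attaining `Q` at `v`. -/
lemma credal_exists (t : List X) (v : X → ℝ) :
    ∃ q : X → ℝ, (∀ x, 0 ≤ q x) ∧ (∑ x, q x = 1) ∧
      (∀ u : X → ℝ, ∑ x, u x * q x ≤ Q.Q t u) ∧ (∑ x, v x * q x = Q.Q t v) := by
  -- first, a linear functional dominated by `Q.Q t` and attaining it at `v`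
  have main : ∀ w : X → ℝ, w ≠ 0 → ∃ g : (X → ℝ) →ₗ[ℝ] ℝ,
      (∀ u, g u ≤ Q.Q t u) ∧ g w = Q.Q t w := by
    intro w hw
    have H : ∀ c : ℝ, c • w = 0 → c • (Q.Q t w) = 0 := by
      intro c hc
      rcases smul_eq_zero.mp hc with h | h
      · simp [h]
      · exact absurd h hw
    set fpm := LinearPMap.mkSpanSingleton' (R := ℝ) (σ := RingHom.id ℝ) w (Q.Q t w) H with hfpm
    have hdom : fpm.domain = Submodule.span ℝ {w} :=
      LinearPMap.domain_mkSpanSingleton w (Q.Q t w) H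
    have hf : ∀ x : fpm.domain, fpm x ≤ Q.Q t x := by
      rintro ⟨xv, hxv⟩
      have hxv' : xv ∈ Submodule.span ℝ {w} := hdom ▸ hxv
      obtain ⟨c, hc⟩ := Submodule.mem_span_singleton.mp hxv'
      have hx : (⟨xv, hxv⟩ : fpm.domain) = ⟨c • w, hc ▸ hxv⟩ := Subtype.ext hc.symm
      rw [hx, LinearPMap.mkSpanSingleton'_apply]
      show c • Q.Q t w ≤ Q.Q t (c • w)
      rcases le_or_gt 0 c with h0 | h0
      · rw [Q.pos_homog t c w h0]; rfl
      · have h1 := Q_neg_pair (Q := Q) t (c • w)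
        have h2 : Q.Q t (-(c • w)) = (-c) * Q.Q t w := by
          rw [← Q.pos_homog t (-c) w (by linarith)]
          congr 1
          ext x
          simp [neg_smul]
        rw [h2] at h1
        have : c • Q.Q t w = c * Q.Q t w := rfl
        linarith
    obtain ⟨g, hg1, hg2⟩ := exists_extension_of_le_sublinear fpm (Q.Q t)
      (fun c hc x => Q.pos_homog t c x hc.le) (fun x y => Q.subadd t x y) hf
    refine ⟨g, hg2, ?_⟩
    have hwmem : w ∈ fpm.domain := by
      rw [hdom]; exact Submodule.mem_span_singleton_self w
    have h3 := hg1 ⟨w, hwmem⟩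
    have hx : (⟨w, hwmem⟩ : fpm.domain) = ⟨(1:ℝ) • w, by simpa using hwmem⟩ :=
      Subtype.ext (by simp)
    rw [hx, LinearPMap.mkSpanSingleton'_apply] at h3
    simpa using h3
  -- package a linear functional into a mass function
  have pack : ∀ g : (X → ℝ) →ₗ[ℝ] ℝ, (∀ u, g u ≤ Q.Q t u) →
      ∃ q : X → ℝ, (∀ x, 0 ≤ q x) ∧ (∑ x, q x = 1) ∧
        (∀ u : X → ℝ, ∑ x, u x * q x = g u) := by
    intro g hg
    set q : X → ℝ := fun x => g (fun j => if x = j then 1 else 0) with hq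
    have hrepr : ∀ u : X → ℝ, ∑ x, u x * q x = g u := by
      intro u
      conv_rhs => rw [pi_eq_sum_univ u]
      rw [map_sum]
      congr 1
      ext x
      rw [LinearMap.map_smul]
      simp [hq, smul_eq_mul]
    have hpos : ∀ x, 0 ≤ q x := by
      intro x
      have h1 : g (-(fun j => if x = j then 1 else 0)) ≤ Q.Q t (-(fun j => if x = j then 1 else 0)) := hg _
      have h2 : Q.Q t (-(fun j => if x = j then 1 else 0)) ≤ 0 := Q_le_of_le (fun y => by
        by_cases h : x = y <;> simp [h])
      have h3 : g (-(fun j => if x = j then 1 else 0)) = -(q x) := by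
        rw [map_neg, hq]
      linarith
    have hsum : ∑ x, q x = 1 := by
      have h1 : g (fun _ => (1:ℝ)) ≤ Q.Q t (fun _ => 1) := hg _
      have h2 : g (-(fun _ : X => (1:ℝ))) ≤ Q.Q t (-(fun _ : X => (1:ℝ))) := hg _
      rw [Q_const] at h1
      have h3 : Q.Q t (-(fun _ : X => (1:ℝ))) = -1 := by
        have : (-(fun _ : X => (1:ℝ))) = (fun _ : X => (-1:ℝ)) := by ext; simp
        rw [this, Q_const]
      rw [h3, map_neg] at h2
      have h4 : ∑ x, (fun _ : X => (1:ℝ)) x * q x = g (fun _ => (1:ℝ)) := hrepr _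
      simp only [one_mul] at h4
      linarith
    exact ⟨q, hpos, hsum, hrepr⟩
  by_cases hv : v = (0 : X → ℝ)
  · have h1 : (fun _ : X => (1:ℝ)) ≠ 0 := by
      intro h
      have := congrFun h (Classical.arbitrary X)
      simpa using this
    obtain ⟨g, hg1, hg2⟩ := main (fun _ => 1) h1
    obtain ⟨q, hq1, hq2, hq3⟩ := pack g hg1
    refine ⟨q, hq1, hq2, fun u => (hq3 u).le.trans (hg1 u), ?_⟩
    rw [hv]
    have : ∑ x, (0 : X → ℝ) x * q x = 0 := by simp
    rw [this, Q_zero]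
  · obtain ⟨g, hg1, hg2⟩ := main v hv
    obtain ⟨q, hq1, hq2, hq3⟩ := pack g hg1
    exact ⟨q, hq1, hq2, fun u => (hq3 u).le.trans (hg1 u), (hq3 v).trans hg2⟩

end Credal


section KeyInfra

variable (q : List X → X → ℝ)

/-- order embedding of the finite state space -/
noncomputable def ordX : X → ℕ := fun x => ((Fintype.equivFin X) x : ℕ)

lemma ordX_inj : Function.Injective (ordX (X := X)) := by
  intro a b h
  have : (Fintype.equivFin X) a = (Fintype.equivFin X) b := Fin.ext h
  exact (Fintype.equivFin X).injective this

/-- partial sums of masses below `x` -/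
noncomputable def pSum (z : List X) (x : X) : ℝ :=
  ∑ y ∈ Finset.univ.filter (fun y => ordX y < ordX x), q z y

/-- partial sums of masses below rank `j` -/
noncomputable def pSumN (z : List X) (j : ℕ) : ℝ :=
  ∑ y ∈ Finset.univ.filter (fun y => ordX y < j), q z y

variable (s : List X)

/-- length of the interval of a node -/
noncomputable def lenI (z : List X) : ℝ :=
  ∏ i ∈ Finset.Ico s.length z.length, q (z.take i) (z.getD i (dflt X))

/-- left endpoint of the interval of a node -/
noncomputable def ptI (z : List X) : ℝ :=
  ∑ i ∈ Finset.Ico s.length z.length, lenI q s (z.take i) * pSum q (z.take i) (z.getD i (dflt X))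

/-- the half-open interval of a node -/
noncomputable def intI (z : List X) : Set ℝ :=
  Set.Ico (ptI q s z) (ptI q s z + lenI q s z)

variable {q s}
variable (hqpos : ∀ z x, 0 ≤ q z x) (hqsum : ∀ z, ∑ x, q z x = 1)

lemma pSum_eq (z : List X) (x : X) : pSum q z x = pSumN q z (ordX x) := rfl

include hqpos in
lemma pSumN_mono (z : List X) {j j' : ℕ} (h : j ≤ j') : pSumN q z j ≤ pSumN q z j' := by
  apply Finset.sum_le_sum_of_subset_of_nonneg
  · intro y hy
    simp only [Finset.mem_filter] at hy ⊢
    exact ⟨hy.1, lt_of_lt_of_le hy.2 h⟩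
  · exact fun y _ _ => hqpos z y

lemma pSumN_zero (z : List X) : pSumN q z 0 = 0 := by
  simp [pSumN]

include hqsum in
lemma pSumN_card (z : List X) : pSumN q z (Fintype.card X) = 1 := by
  rw [pSumN, ← hqsum z]
  congr 1
  apply Finset.filter_true_of_mem
  intro y _
  exact (Fintype.equivFin X y).isLt

lemma pSumN_succ (z : List X) {j : ℕ} (hj : j < Fintype.card X) :
    pSumN q z (j + 1) = pSumN q z j + q z ((Fintype.equivFin X).symm ⟨j, hj⟩) := by
  set x0 := (Fintype.equivFin X).symm ⟨j, hj⟩ with hx0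
  have hord : ordX x0 = j := by simp [ordX, hx0]
  have hset : Finset.univ.filter (fun y : X => ordX y < j + 1)
      = insert x0 (Finset.univ.filter (fun y : X => ordX y < j)) := by
    ext y
    simp only [Finset.mem_filter, Finset.mem_insert, Finset.mem_univ, true_and]
    constructor
    · intro hy
      rcases Nat.lt_or_ge (ordX y) j with h | h
      · exact Or.inr h
      · left
        apply ordX_inj
        rw [hord]
        omega
    · rintro (rfl | hy)
      · omega
      · omega
  rw [pSumN, hset, Finset.sum_insert (by simp [hord]), pSumN]
  exact add_comm _ _

lemma pSumN_ord_succ (z : List X) (a : X) :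
    pSumN q z (ordX a + 1) = pSum q z a + q z a := by
  have hcard : ordX a < Fintype.card X := (Fintype.equivFin X a).isLt
  have h3 := pSumN_succ (q := q) z hcard
  have h6 : (⟨ordX a, hcard⟩ : Fin (Fintype.card X)) = (Fintype.equivFin X) a := Fin.ext rfl
  rw [h6, Equiv.symm_apply_apply] at h3
  rw [h3, pSum_eq]

include hqpos hqsum in
lemma pSumN_le_one (z : List X) (j : ℕ) : pSumN q z j ≤ 1 := by
  rcases le_or_gt j (Fintype.card X) with h | h
  · exact (pSumN_mono hqpos z h).trans (pSumN_card hqsum z).le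
  · have : pSumN q z j = pSumN q z (Fintype.card X) := by
      unfold pSumN
      congr 1
      apply Finset.filter_congr
      intro y _
      have h2 : ordX y < Fintype.card X := (Fintype.equivFin X y).isLt
      constructor
      · intro _; exact h2
      · intro _; omega
    rw [this, pSumN_card hqsum z]

include hqpos in
lemma pSum_nonneg (z : List X) (x : X) : 0 ≤ pSum q z x :=
  Finset.sum_nonneg (fun y _ => hqpos z y)

include hqpos in
lemma lenI_nonneg (z : List X) : 0 ≤ lenI q s z :=
  Finset.prod_nonneg (fun i _ => hqpos _ _)

lemma lenI_self : lenI q s s = 1 := by simp [lenI]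

lemma ptI_self : ptI q s s = 0 := by simp [ptI]

lemma take_append_lt {z : List X} {x : X} {i : ℕ} (h : i ≤ z.length) :
    (z ++ [x]).take i = z.take i := List.take_append_of_le_length h

lemma getD_append_lt {z : List X} {x : X} {i : ℕ} (h : i < z.length) :
    (z ++ [x]).getD i (dflt X) = z.getD i (dflt X) := by
  rw [List.getD_eq_getElem _ _ (by simp; omega), List.getD_eq_getElem _ _ h]
  exact List.getElem_append_left h

lemma getD_append_self {z : List X} {x : X} :
    (z ++ [x]).getD z.length (dflt X) = x := by
  rw [List.getD_eq_getElem _ _ (by simp)]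
  exact List.getElem_concat_length rfl _

lemma lenI_append (z : List X) (x : X) (hz : s.length ≤ z.length) :
    lenI q s (z ++ [x]) = lenI q s z * q z x := by
  unfold lenI
  have hl : (z ++ [x]).length = z.length + 1 := by simp
  rw [hl, Finset.prod_Ico_succ_top hz]
  congr 1
  · apply Finset.prod_congr rfl
    intro i hi
    simp only [Finset.mem_Ico] at hi
    rw [take_append_lt hi.2.le, getD_append_lt hi.2]
  · rw [take_append_lt le_rfl, getD_append_self, List.take_length]

lemma ptI_append (z : List X) (x : X) (hz : s.length ≤ z.length) :
    ptI q s (z ++ [x]) = ptI q s z + lenI q s z * pSum q z x := by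
  unfold ptI
  have hl : (z ++ [x]).length = z.length + 1 := by simp
  rw [hl, Finset.sum_Ico_succ_top hz]
  congr 1
  · apply Finset.sum_congr rfl
    intro i hi
    simp only [Finset.mem_Ico] at hi
    rw [take_append_lt hi.2.le, getD_append_lt hi.2]
  · rw [take_append_lt le_rfl, getD_append_self, List.take_length]

include hqpos hqsum in
lemma intI_subset (z : List X) (x : X) (hz : s.length ≤ z.length) :
    intI q s (z ++ [x]) ⊆ intI q s z := by
  have hL := lenI_nonneg (s := s) hqpos z
  have h1 := ptI_append (q := q) (s := s) z x hz
  have h2 := lenI_append (q := q) (s := s) z x hz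
  have hp1 : 0 ≤ pSum q z x := pSum_nonneg hqpos z x
  have hp2 : pSum q z x + q z x ≤ 1 := by
    have hcard : ordX x < Fintype.card X := (Fintype.equivFin X x).isLt
    have h3 := pSumN_succ (q := q) z hcard
    have h4 : ((Fintype.equivFin X).symm ⟨ordX x, hcard⟩) = x := by
      have h6 : (⟨ordX x, hcard⟩ : Fin (Fintype.card X)) = (Fintype.equivFin X) x :=
        Fin.ext rfl
      rw [h6, Equiv.symm_apply_apply]
    rw [h4] at h3
    rw [pSum_eq]
    have h5 := pSumN_le_one hqpos hqsum z (ordX x + 1)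
    rw [h3] at h5
    linarith
  intro u hu
  simp only [intI, Set.mem_Ico] at hu ⊢
  constructor
  · calc ptI q s z ≤ ptI q s z + lenI q s z * pSum q z x := by nlinarith
    _ ≤ u := by rw [← h1]; exact hu.1
  · calc u < ptI q s (z ++ [x]) + lenI q s (z ++ [x]) := hu.2
    _ = ptI q s z + lenI q s z * (pSum q z x + q z x) := by rw [h1, h2]; ring
    _ ≤ ptI q s z + lenI q s z * 1 := by nlinarith
    _ = ptI q s z + lenI q s z := by ring

include hqpos in
lemma intI_ordered (z : List X) {a a' : X} (h : ordX a < ordX a') (hz : s.length ≤ z.length) :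
    ptI q s (z ++ [a]) + lenI q s (z ++ [a]) ≤ ptI q s (z ++ [a']) := by
  rw [ptI_append z a hz, lenI_append z a hz, ptI_append z a' hz]
  have hL := lenI_nonneg (s := s) hqpos z
  have h1 : pSum q z a + q z a = pSumN q z (ordX a + 1) := (pSumN_ord_succ z a).symm
  have h2 : pSumN q z (ordX a + 1) ≤ pSumN q z (ordX a') := pSumN_mono hqpos z (by omega)
  rw [pSum_eq (z := z) (x := a')]
  nlinarith [mul_le_mul_of_nonneg_left (h1 ▸ h2) hL]

include hqpos in
lemma intI_sibling_disjoint (z : List X) {x x' : X} (hx : x ≠ x') (hz : s.length ≤ z.length) :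
    intI q s (z ++ [x]) ∩ intI q s (z ++ [x']) = ∅ := by
  have main : ∀ a a' : X, ordX a < ordX a' →
      intI q s (z ++ [a]) ∩ intI q s (z ++ [a']) = ∅ := by
    intro a a' h
    ext u
    simp only [intI, Set.mem_inter_iff, Set.mem_Ico, Set.mem_empty_iff_false, iff_false]
    rintro ⟨⟨h1a, h1b⟩, h2a, h2b⟩
    have := intI_ordered hqpos z h hz
    linarith
  rcases Nat.lt_or_ge (ordX x) (ordX x') with h | h
  · exact main x x' h
  · rcases Nat.lt_or_ge (ordX x') (ordX x) with h' | h'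
    · rw [Set.inter_comm]; exact main x' x h'
    · exact absurd (ordX_inj (by omega)) hx

include hqpos hqsum in
lemma intI_cover (z : List X) (hz : s.length ≤ z.length) {u : ℝ} (hu : u ∈ intI q s z) :
    ∃ x : X, u ∈ intI q s (z ++ [x]) := by
  simp only [intI, Set.mem_Ico] at hu
  have hLnn := lenI_nonneg (s := s) hqpos z
  classical
  set P : ℕ → Prop := fun j => ptI q s z + lenI q s z * pSumN q z j ≤ u with hP
  have hP0 : P 0 := by
    simp only [hP, pSumN_zero, mul_zero, add_zero]
    exact hu.1
  have hPcard : ¬ P (Fintype.card X) := by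
    simp only [hP, pSumN_card hqsum, mul_one]
    push_neg
    exact hu.2
  set j0 := Nat.findGreatest P (Fintype.card X) with hj0
  have hj0P : P j0 := Nat.findGreatest_spec (Nat.zero_le _) hP0
  have hj0le : j0 ≤ Fintype.card X := Nat.findGreatest_le _
  have hj0lt : j0 < Fintype.card X := lt_of_le_of_ne hj0le (fun h => hPcard (h ▸ hj0P))
  have hnot : ¬ P (j0 + 1) := Nat.findGreatest_is_greatest (Nat.lt_succ_self _) (by omega)
  refine ⟨(Fintype.equivFin X).symm ⟨j0, hj0lt⟩, ?_⟩
  set a := (Fintype.equivFin X).symm ⟨j0, hj0lt⟩ with ha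
  have horda : ordX a = j0 := by simp [ordX, ha]
  simp only [intI, Set.mem_Ico]
  constructor
  · rw [ptI_append z a hz, pSum_eq, horda]
    exact hj0P
  · rw [ptI_append z a hz, lenI_append z a hz]
    have h8 := pSumN_succ (q := q) z hj0lt
    rw [← ha] at h8
    simp only [hP] at hnot
    push_neg at hnot
    rw [h8, mul_add] at hnot
    rw [pSum_eq, horda]
    linarith

end KeyInfra


section KeyCoding

variable {q : List X → X → ℝ} {s : List X}
variable (hqpos : ∀ z x, 0 ≤ q z x) (hqsum : ∀ z, ∑ x, q z x = 1)

include hqpos hqsum in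
lemma intI_desc_subset {p z : List X} (hp : s.length ≤ p.length) (hpz : p <+: z) :
    intI q s z ⊆ intI q s p := by
  obtain ⟨r, rfl⟩ := hpz
  induction r generalizing p with
  | nil => simp
  | cons x r ih =>
    have h1 : p ++ x :: r = (p ++ [x]) ++ r := by simp
    rw [h1]
    refine (ih (p := p ++ [x]) (by simp; omega)).trans ?_
    exact intI_subset hqpos hqsum p x hp

include hqpos hqsum in
lemma intI_unique {u : ℝ} : ∀ (k : ℕ) (t z₁ z₂ : List X), s.length ≤ t.length →
    t <+: z₁ → t <+: z₂ → z₁.length = t.length + k → z₂.length = t.length + k →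
    u ∈ intI q s z₁ → u ∈ intI q s z₂ → z₁ = z₂ := by
  intro k
  induction k with
  | zero =>
    intro t z₁ z₂ _ h1 h2 hl1 hl2 _ _
    rw [← h1.eq_of_length (by omega), ← h2.eq_of_length (by omega)]
  | succ k ih =>
    intro t z₁ z₂ ht h1 h2 hl1 hl2 hu1 hu2
    obtain ⟨r₁, rfl⟩ := h1
    obtain ⟨r₂, rfl⟩ := h2
    cases r₁ with
    | nil => simp at hl1
    | cons x₁ r₁' =>
    cases r₂ with
    | nil => simp at hl2
    | cons x₂ r₂' =>
    have e1 : t ++ x₁ :: r₁' = (t ++ [x₁]) ++ r₁' := by simp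
    have e2 : t ++ x₂ :: r₂' = (t ++ [x₂]) ++ r₂' := by simp
    rw [e1] at hu1 hl1 ⊢
    rw [e2] at hu2 hl2 ⊢
    by_cases hx : x₁ = x₂
    · subst hx
      exact ih (t ++ [x₁]) _ _ (by simp; omega) (List.prefix_append _ _)
        (List.prefix_append _ _) (by simp at hl1 ⊢; omega) (by simp at hl2 ⊢; omega) hu1 hu2
    · exfalso
      have hs1 : u ∈ intI q s (t ++ [x₁]) :=
        intI_desc_subset hqpos hqsum (by simp; omega) (List.prefix_append _ _) hu1
      have hs2 : u ∈ intI q s (t ++ [x₂]) :=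
        intI_desc_subset hqpos hqsum (by simp; omega) (List.prefix_append _ _) hu2
      have hd := intI_sibling_disjoint (s := s) hqpos t hx ht
      rw [Set.eq_empty_iff_forall_notMem] at hd
      exact hd u ⟨hs1, hs2⟩

lemma intI_base : intI q s s = Set.Ico (0:ℝ) 1 := by
  rw [intI, ptI_self, lenI_self]
  norm_num

variable (q s) in
/-- the chain of nodes assigned to a point of `[0,1)` -/
noncomputable def pick (hqpos : ∀ z x, 0 ≤ q z x) (hqsum : ∀ z, ∑ x, q z x = 1)
    (u : ℝ) (hu : u ∈ Set.Ico (0:ℝ) 1) :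
    ∀ k : ℕ, {z : List X // (s <+: z ∧ z.length = s.length + k) ∧ u ∈ intI q s z}
  | 0 => ⟨s, ⟨List.prefix_refl s, by simp⟩, by rw [intI_base]; exact hu⟩
  | (k+1) =>
      let p := pick hqpos hqsum u hu k
      let x := Classical.choose (intI_cover hqpos hqsum p.val p.2.1.1.length_le p.2.2)
      ⟨p.val ++ [x], ⟨p.2.1.1.trans (p.val.prefix_append [x]), by simp [p.2.1.2]; omega⟩,
        Classical.choose_spec (intI_cover hqpos hqsum p.val p.2.1.1.length_le p.2.2)⟩

lemma pick_length (u : ℝ) (hu : u ∈ Set.Ico (0:ℝ) 1) (k : ℕ) :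
    (pick q s hqpos hqsum u hu k).val.length = s.length + k :=
  (pick q s hqpos hqsum u hu k).2.1.2

lemma pick_succ_prefix (u : ℝ) (hu : u ∈ Set.Ico (0:ℝ) 1) (k : ℕ) :
    (pick q s hqpos hqsum u hu k).val <+: (pick q s hqpos hqsum u hu (k+1)).val :=
  List.prefix_append _ _

lemma pick_prefix_mono (u : ℝ) (hu : u ∈ Set.Ico (0:ℝ) 1) {k k' : ℕ} (h : k ≤ k') :
    (pick q s hqpos hqsum u hu k).val <+: (pick q s hqpos hqsum u hu k').val := by
  induction k' with
  | zero =>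
    have : k = 0 := by omega
    subst this
    exact List.prefix_refl _
  | succ k' ih =>
    rcases Nat.lt_or_ge k (k'+1) with h' | h'
    · exact (ih (by omega)).trans (pick_succ_prefix hqpos hqsum u hu k')
    · have : k = k' + 1 := by omega
      subst this
      exact List.prefix_refl _

variable (q s) in
/-- the coding map `[0,1) → Path X` -/
noncomputable def Phi (hqpos : ∀ z x, 0 ≤ q z x) (hqsum : ∀ z, ∑ x, q z x = 1)
    (u : ℝ) (hu : u ∈ Set.Ico (0:ℝ) 1) : Path X :=
  fun i => (pick q s hqpos hqsum u hu (i+1)).val.getD i (dflt X)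

lemma prefixList_Phi (u : ℝ) (hu : u ∈ Set.Ico (0:ℝ) 1) (k : ℕ) :
    prefixList (Phi q s hqpos hqsum u hu) (s.length + k) = (pick q s hqpos hqsum u hu k).val := by
  apply List.ext_getElem
  · simp [pick_length]
  · intro i h1 h2
    rw [prefixList_getElem _ _ _ (by simpa using h1)]
    show (pick q s hqpos hqsum u hu (i+1)).val.getD i (dflt X) = _
    have hlen1 : i < (pick q s hqpos hqsum u hu (i+1)).val.length := by
      rw [pick_length]; omega
    rw [List.getD_eq_getElem _ _ hlen1]
    rcases Nat.le_total (i+1) k with h | h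
    · exact (pick_prefix_mono hqpos hqsum u hu h).getElem hlen1
    · exact ((pick_prefix_mono hqpos hqsum u hu h).getElem (by rw [pick_length] at h2 ⊢; omega)).symm

lemma Phi_mem_cyl (u : ℝ) (hu : u ∈ Set.Ico (0:ℝ) 1) (k : ℕ) :
    Phi q s hqpos hqsum u hu ∈ cyl (pick q s hqpos hqsum u hu k).val := by
  rw [mem_cyl_iff, pick_length (q := q) hqpos hqsum u hu k]
  exact prefixList_Phi hqpos hqsum u hu k

lemma Phi_mem_cyl_s (u : ℝ) (hu : u ∈ Set.Ico (0:ℝ) 1) :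
    Phi q s hqpos hqsum u hu ∈ cyl s :=
  Phi_mem_cyl hqpos hqsum u hu 0

/-- every node of depth `k` over `s` is `s ++ ofFn w` -/
lemma exists_ofFn {z : List X} (hz : s <+: z) {k : ℕ} (hl : z.length = s.length + k) :
    ∃ w : Fin k → X, z = s ++ List.ofFn w := by
  obtain ⟨r, rfl⟩ := hz
  have hr : r.length = k := by simp at hl; omega
  subst hr
  exact ⟨r.get, by rw [List.ofFn_get]⟩

end KeyCoding


section KeySum

/-- expectation recursion along a selection of mass functions -/
noncomputable def Srec (q : List X → X → ℝ) : ℕ → (List X → ℝ) → List X → ℝ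
  | 0, h, t => h t
  | (k+1), h, t => ∑ x, q t x * Srec q k h (t ++ [x])

variable {Q : UpperExpTree X} {q : List X → X → ℝ} {s : List X}
variable (hqpos : ∀ z x, 0 ≤ q z x) (hqsum : ∀ z, ∑ x, q z x = 1)
variable (hqle : ∀ (z : List X) (u : X → ℝ), ∑ x, u x * q z x ≤ Q.Q z u)

include hqpos hqle in
lemma Srec_le_Vrec : ∀ (k : ℕ) (h : List X → ℝ) (t : List X),
    Srec q k h t ≤ Vrec Q k h t := by
  intro k
  induction k with
  | zero => intro h t; exact le_rfl
  | succ k ih =>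
    intro h t
    show ∑ x, q t x * Srec q k h (t ++ [x]) ≤ Q.Q t (fun x => Vrec Q k h (t ++ [x]))
    calc ∑ x, q t x * Srec q k h (t ++ [x])
        ≤ ∑ x, q t x * Vrec Q k h (t ++ [x]) := by
          apply Finset.sum_le_sum
          intro x _
          exact mul_le_mul_of_nonneg_left (ih h (t ++ [x])) (hqpos t x)
      _ = ∑ x, (fun y => Vrec Q k h (t ++ [y])) x * q t x := by
          apply Finset.sum_congr rfl
          intro x _
          ring
      _ ≤ Q.Q t (fun x => Vrec Q k h (t ++ [x])) := hqle t _

include hqsum in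
lemma Srec_sub_const (b : ℝ) : ∀ (k : ℕ) (h : List X → ℝ) (t : List X),
    Srec q k (fun z => h z - b) t = Srec q k h t - b := by
  intro k
  induction k with
  | zero => intro h t; rfl
  | succ k ih =>
    intro h t
    show ∑ x, q t x * Srec q k (fun z => h z - b) (t ++ [x])
        = (∑ x, q t x * Srec q k h (t ++ [x])) - b
    have h1 : ∀ x : X, q t x * Srec q k (fun z => h z - b) (t ++ [x])
        = q t x * Srec q k h (t ++ [x]) - q t x * b := by
      intro x
      rw [ih h (t ++ [x])]
      ring
    rw [Finset.sum_congr rfl (fun x _ => h1 x), Finset.sum_sub_distrib, ← Finset.sum_mul,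
      hqsum t, one_mul]

lemma lenI_base_step (t : List X) (x : X) (r : List X) :
    lenI q t ((t ++ [x]) ++ r) = q t x * lenI q (t ++ [x]) ((t ++ [x]) ++ r) := by
  unfold lenI
  set z := (t ++ [x]) ++ r with hz
  have hzl : z.length = t.length + 1 + r.length := by simp [hz]; omega
  have hlt : t.length < z.length := by omega
  rw [Finset.prod_eq_prod_Ico_succ_bot hlt]
  have htake : z.take t.length = t := by
    rw [hz, List.append_assoc]
    exact List.take_left' rfl
  have hget : z.getD t.length (dflt X) = x := by
    rw [hz, List.getD_eq_getElem _ _ (by simp)]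
    rw [List.getElem_append_left (by simp)]
    exact List.getElem_concat_length rfl _
  rw [htake, hget]
  congr 1
  apply Finset.prod_congr
  · congr 1
    simp
  · intro i _
    rfl

lemma Srec_eq_sum : ∀ (k : ℕ) (h : List X → ℝ) (t : List X),
    Srec q k h t = ∑ w : Fin k → X,
      lenI q t (t ++ List.ofFn w) * h (t ++ List.ofFn w) := by
  intro k
  induction k with
  | zero =>
    intro h t
    rw [Fintype.sum_unique]
    show h t = lenI q t (t ++ List.ofFn (default : Fin 0 → X)) * h (t ++ List.ofFn _)
    have h0 : List.ofFn (default : Fin 0 → X) = [] := by simp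
    rw [h0, List.append_nil, lenI_self, one_mul]
  | succ k ih =>
    intro h t
    show ∑ x, q t x * Srec q k h (t ++ [x]) = _
    have h1 : ∀ x : X, q t x * Srec q k h (t ++ [x])
        = ∑ w' : Fin k → X, lenI q t ((t ++ [x]) ++ List.ofFn w')
            * h ((t ++ [x]) ++ List.ofFn w') := by
      intro x
      rw [ih h (t ++ [x]), Finset.mul_sum]
      apply Finset.sum_congr rfl
      intro w' _
      rw [lenI_base_step]
      ring
    rw [Finset.sum_congr rfl (fun x _ => h1 x)]
    have h4 : ∑ p : X × (Fin k → X),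
        lenI q t ((t ++ [p.1]) ++ List.ofFn p.2) * h ((t ++ [p.1]) ++ List.ofFn p.2)
        = ∑ w : Fin (k+1) → X, lenI q t (t ++ List.ofFn w) * h (t ++ List.ofFn w) := by
      apply Fintype.sum_equiv (Fin.consEquiv (fun _ => X))
      intro p
      obtain ⟨x, w'⟩ := p
      have h2 : List.ofFn ((Fin.consEquiv (fun _ => X)) (x, w')) = x :: List.ofFn w' := by
        show List.ofFn (Fin.cons x w') = _
        simp [List.ofFn_succ]
      rw [h2]
      have h3 : t ++ x :: List.ofFn w' = (t ++ [x]) ++ List.ofFn w' := by simp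
      rw [h3]
    simp only [Fintype.sum_prod_type] at h4
    exact h4

variable (q s) in
/-- integrand: node-indicator sum representation -/
noncomputable def Ifun (k : ℕ) (h : List X → ℝ) : ℝ → ℝ≥0∞ :=
  fun u => ∑ w : Fin k → X, (intI q s (s ++ List.ofFn w)).indicator
    (fun _ => ENNReal.ofReal (h (s ++ List.ofFn w))) u

lemma Ifun_measurable (k : ℕ) (h : List X → ℝ) : Measurable (Ifun q s k h) := by
  apply Finset.measurable_sum
  intro w _
  exact Measurable.indicator measurable_const measurableSet_Ico

include hqpos hqsum in
lemma Ifun_eq (k : ℕ) (h : List X → ℝ) {u : ℝ} (hu : u ∈ Set.Ico (0:ℝ) 1) :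
    Ifun q s k h u = ENNReal.ofReal (h (pick q s hqpos hqsum u hu k).val) := by
  obtain ⟨w₀, hw₀⟩ := exists_ofFn (pick q s hqpos hqsum u hu k).2.1.1
    (pick_length hqpos hqsum u hu k)
  rw [Ifun, Finset.sum_eq_single w₀]
  · rw [← hw₀, Set.indicator_of_mem (pick q s hqpos hqsum u hu k).2.2]
  · intro w _ hw
    apply Set.indicator_of_notMem
    intro hmem
    apply hw
    have := intI_unique hqpos hqsum k s (s ++ List.ofFn w) (s ++ List.ofFn w₀) le_rfl
      (List.prefix_append _ _) (List.prefix_append _ _) (by simp) (by simp)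
      hmem (hw₀ ▸ (pick q s hqpos hqsum u hu k).2.2)
    exact List.ofFn_inj.mp (List.append_cancel_left this)
  · intro hmem
    exact absurd (Finset.mem_univ w₀) hmem

include hqpos hqsum in
lemma Ifun_lintegral (k : ℕ) (h : List X → ℝ)
    (hnn : ∀ z, 0 ≤ h z) :
    ∫⁻ u in Set.Ico (0:ℝ) 1, Ifun q s k h u = ENNReal.ofReal (Srec q k h s) := by
  have hmeas : ∀ w ∈ (Finset.univ : Finset (Fin k → X)), AEMeasurable
      (fun u => (intI q s (s ++ List.ofFn w)).indicator
        (fun _ => ENNReal.ofReal (h (s ++ List.ofFn w))) u)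
      (MeasureTheory.volume.restrict (Set.Ico (0:ℝ) 1)) :=
    fun w _ => (Measurable.indicator measurable_const measurableSet_Ico).aemeasurable
  simp only [Ifun]
  rw [MeasureTheory.lintegral_finset_sum' Finset.univ hmeas]
  have hterm : ∀ w : Fin k → X,
      (∫⁻ u in Set.Ico (0:ℝ) 1, (intI q s (s ++ List.ofFn w)).indicator
        (fun _ => ENNReal.ofReal (h (s ++ List.ofFn w))) u)
      = ENNReal.ofReal (lenI q s (s ++ List.ofFn w) * h (s ++ List.ofFn w)) := by
    intro w
    rw [MeasureTheory.lintegral_indicator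
      (show MeasurableSet (intI q s (s ++ List.ofFn w)) from measurableSet_Ico)]
    rw [MeasureTheory.setLIntegral_const]
    rw [MeasureTheory.Measure.restrict_apply
      (show MeasurableSet (intI q s (s ++ List.ofFn w)) from measurableSet_Ico)]
    have hsub : intI q s (s ++ List.ofFn w) ⊆ Set.Ico (0:ℝ) 1 := by
      rw [← intI_base (q := q)]
      exact intI_desc_subset hqpos hqsum le_rfl (List.prefix_append _ _)
    rw [Set.inter_eq_self_of_subset_left hsub]
    rw [intI, Real.volume_Ico]
    have h5 : ptI q s (s ++ List.ofFn w) + lenI q s (s ++ List.ofFn w)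
        - ptI q s (s ++ List.ofFn w) = lenI q s (s ++ List.ofFn w) := by ring
    rw [h5, ← ENNReal.ofReal_mul (hnn _), mul_comm]
  rw [Finset.sum_congr rfl (fun w _ => hterm w)]
  rw [Srec_eq_sum k h s, ENNReal.ofReal_sum_of_nonneg
    (fun w _ => mul_nonneg (lenI_nonneg hqpos _) (hnn _))]

end KeySum


section Transfer

lemma liminf_transfer {a b : ℝ} {v : ℕ → ℝ}
    (hab : (a : EReal) ≤ Filter.liminf (fun k => ((v k : ℝ) : EReal)) Filter.atTop) :
    ENNReal.ofReal (a - b) ≤ Filter.liminf (fun k => ENNReal.ofReal (v k - b)) Filter.atTop := by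
  by_contra hcon
  push_neg at hcon
  obtain ⟨c, hc1, hc2⟩ := exists_between hcon
  have hcne : c ≠ ⊤ := (hc2.trans ENNReal.ofReal_lt_top).ne
  have hfreq : ∃ᶠ k in Filter.atTop, ENNReal.ofReal (v k - b) < c :=
    Filter.frequently_lt_of_liminf_lt (by isBoundedDefault) hc1
  have hfreq2 : ∃ᶠ k in Filter.atTop, ((v k : ℝ) : EReal) ≤ ((b + c.toReal : ℝ) : EReal) := by
    apply hfreq.mono
    intro k hk
    have h1 : v k - b < c.toReal := by
      by_contra h2
      push_neg at h2
      have h3 : c ≤ ENNReal.ofReal (v k - b) := by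
        rw [← ENNReal.ofReal_toReal hcne]
        exact ENNReal.ofReal_le_ofReal h2
      exact absurd hk (not_lt.mpr h3)
    have h4 : v k ≤ b + c.toReal := by linarith
    exact_mod_cast h4
  have hlim : Filter.liminf (fun k => ((v k : ℝ) : EReal)) Filter.atTop
      ≤ ((b + c.toReal : ℝ) : EReal) := Filter.liminf_le_of_frequently_le hfreq2
  have ha : a ≤ b + c.toReal := by exact_mod_cast hab.trans hlim
  have h5 : ENNReal.ofReal (a - b) ≤ c := by
    rw [← ENNReal.ofReal_toReal hcne]
    exact ENNReal.ofReal_le_ofReal (by linarith)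
  exact absurd hc2 (not_lt.mpr h5)

lemma limsup_transfer {V b : ℝ} {W : ℕ → ℝ} (hW : ∀ k, b ≤ W k)
    (h : ENNReal.ofReal (V - b) ≤ Filter.liminf (fun k => ENNReal.ofReal (W k - b)) Filter.atTop) :
    ((V : ℝ) : EReal) ≤ Filter.limsup (fun k => ((W k : ℝ) : EReal)) Filter.atTop := by
  by_contra hcon
  push_neg at hcon
  set Ls := Filter.limsup (fun k => ((W k : ℝ) : EReal)) Filter.atTop with hLs
  have hb : ((b : ℝ) : EReal) ≤ Ls :=
    Filter.le_limsup_of_frequently_le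
      (Filter.Frequently.of_forall (fun k => by exact_mod_cast hW k))
  obtain ⟨y, hy1, hy2⟩ := exists_between hcon
  have hytop : y ≠ ⊤ := hy2.ne_top
  have hybot : y ≠ ⊥ := ((EReal.bot_lt_coe b).trans_le (hb.trans hy1.le)).ne'
  have hyeq : y = ((y.toReal : ℝ) : EReal) := (EReal.coe_toReal hytop hybot).symm
  set l := y.toReal with hl
  have hblt : b < l := by
    have h6 : ((b : ℝ) : EReal) < ((l : ℝ) : EReal) := hyeq ▸ (hb.trans_lt hy1)
    exact_mod_cast h6
  have hVl : l < V := by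
    have h6 : ((l : ℝ) : EReal) < ((V : ℝ) : EReal) := hyeq ▸ hy2
    exact_mod_cast h6
  have hev : ∀ᶠ k in Filter.atTop, ((W k : ℝ) : EReal) < ((l : ℝ) : EReal) :=
    Filter.eventually_lt_of_limsup_lt (hyeq ▸ hy1)
  have hfreq : ∃ᶠ k in Filter.atTop, ENNReal.ofReal (W k - b) ≤ ENNReal.ofReal (l - b) :=
    (hev.mono (fun k hk => ENNReal.ofReal_le_ofReal (by
      have h7 : W k < l := by exact_mod_cast hk
      linarith))).frequently
  have hlim : Filter.liminf (fun k => ENNReal.ofReal (W k - b)) Filter.atTop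
      ≤ ENNReal.ofReal (l - b) := Filter.liminf_le_of_frequently_le hfreq
  have h2 : ENNReal.ofReal (V - b) ≤ ENNReal.ofReal (l - b) := h.trans hlim
  rw [ENNReal.ofReal_le_ofReal_iff (by linarith)] at h2
  linarith

end Transfer

section KeyMain

variable {Q : UpperExpTree X} {q : List X → X → ℝ} {s : List X}
variable (hqpos : ∀ z x, 0 ≤ q z x) (hqsum : ∀ z, ∑ x, q z x = 1)

include hqsum in
lemma Srec_eq_Vrec_att {m : ℕ} {g : List X → ℝ}
    (hqatt : ∀ z,
      ∑ x, Vrec Q (s.length + m - (z.length + 1)) g (z ++ [x]) * q z x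
        = Q.Q z (fun x => Vrec Q (s.length + m - (z.length + 1)) g (z ++ [x]))) :
    Srec q m g s = Vrec Q m g s := by
  suffices h : ∀ (k : ℕ) (z : List X), s <+: z → z.length + k = s.length + m →
      Srec q k g z = Vrec Q k g z by
    exact h m s (List.prefix_refl s) (by omega)
  intro k
  induction k with
  | zero => intro z _ _; rfl
  | succ k ih =>
    intro z hz hl
    show ∑ x, q z x * Srec q k g (z ++ [x]) = Q.Q z (fun x => Vrec Q k g (z ++ [x]))
    have h1 : ∀ x, Srec q k g (z ++ [x]) = Vrec Q k g (z ++ [x]) := fun x =>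
      ih (z ++ [x]) (hz.trans (z.prefix_append [x])) (by simp; omega)
    have h2 := hqatt z
    have h3 : s.length + m - (z.length + 1) = k := by omega
    rw [h3] at h2
    rw [Finset.sum_congr rfl (fun x _ => by rw [h1 x, mul_comm])]
    exact h2

omit hqpos hqsum in
/-- Key Fatou-type lemma. -/
lemma key_fatou (Q : UpperExpTree X) (s : List X) (m : ℕ) (g : List X → ℝ) (b : ℝ)
    (hgb : ∀ z, b ≤ g z)
    (h : ℕ → Path X → ℝ) (n : ℕ → ℕ)
    (hmeas : ∀ k (ω ω' : Path X), prefixList ω (n k) = prefixList ω' (n k) → h k ω = h k ω')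
    (hhb : ∀ k ω, b ≤ h k ω)
    (hptw : ∀ ω ∈ cyl s, ((g (prefixList ω (s.length + m)) : ℝ) : EReal)
      ≤ Filter.liminf (fun k => ((h k ω : ℝ) : EReal)) Filter.atTop) :
    ((Vrec Q m g s : ℝ) : EReal) ≤
      Filter.limsup (fun k =>
        ((Vrec Q (n k) (fun z => h k (extP z)) s : ℝ) : EReal)) Filter.atTop := by
  have hsel : ∀ z : List X, ∃ qz : X → ℝ, (∀ x, 0 ≤ qz x) ∧ (∑ x, qz x = 1) ∧
      (∀ u : X → ℝ, ∑ x, u x * qz x ≤ Q.Q z u) ∧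
      (∑ x, Vrec Q (s.length + m - (z.length + 1)) g (z ++ [x]) * qz x
        = Q.Q z (fun x => Vrec Q (s.length + m - (z.length + 1)) g (z ++ [x]))) :=
    fun z => credal_exists z _
  choose q hqpos hqsum hqle hqatt using hsel
  -- pointwise comparison of the integrands
  have hGle : ∀ u, u ∈ Set.Ico (0:ℝ) 1 →
      Ifun q s m (fun z => g z - b) u ≤
      Filter.liminf (fun k => Ifun q s (n k) (fun z => h k (extP z) - b) u) Filter.atTop := by
    intro u hu
    rw [Ifun_eq hqpos hqsum m _ hu]
    have hrw : (fun k => Ifun q s (n k) (fun z => h k (extP z) - b) u)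
        = fun k => ENNReal.ofReal (h k (Phi q s hqpos hqsum u hu) - b) := by
      funext k
      rw [Ifun_eq hqpos hqsum (n k) _ hu]
      congr 2
      apply hmeas
      have hlen : n k ≤ (pick q s hqpos hqsum u hu (n k)).val.length := by
        rw [pick_length]; omega
      rw [prefixList_extP_of_le _ hlen]
      rw [← prefixList_take (Phi q s hqpos hqsum u hu)
        (show n k ≤ s.length + n k by omega)]
      rw [prefixList_Phi]
    rw [hrw]
    apply liminf_transfer
    have hmem : Phi q s hqpos hqsum u hu ∈ cyl s := Phi_mem_cyl_s hqpos hqsum u hu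
    have h8 := hptw _ hmem
    rwa [prefixList_Phi hqpos hqsum u hu m] at h8
  -- integral of the `g` side
  have hG : ∫⁻ u in Set.Ico (0:ℝ) 1, Ifun q s m (fun z => g z - b) u
      = ENNReal.ofReal (Vrec Q m g s - b) := by
    rw [Ifun_lintegral hqpos hqsum m _ (fun z => by have := hgb z; linarith)]
    rw [Srec_sub_const hqsum b m g s]
    congr 1
    rw [Srec_eq_Vrec_att hqsum hqatt]
  -- Fatou chain
  have hchain : ENNReal.ofReal (Vrec Q m g s - b)
      ≤ Filter.liminf (fun k =>
          ENNReal.ofReal (Srec q (n k) (fun z => h k (extP z)) s - b)) Filter.atTop := by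
    rw [← hG]
    calc ∫⁻ u in Set.Ico (0:ℝ) 1, Ifun q s m (fun z => g z - b) u
        ≤ ∫⁻ u in Set.Ico (0:ℝ) 1,
            Filter.liminf (fun k => Ifun q s (n k) (fun z => h k (extP z) - b) u)
              Filter.atTop := by
          apply MeasureTheory.setLIntegral_mono
          · exact Measurable.liminf (fun k => Ifun_measurable (n k) _)
          · exact hGle
      _ ≤ Filter.liminf (fun k =>
            ∫⁻ u in Set.Ico (0:ℝ) 1, Ifun q s (n k) (fun z => h k (extP z) - b) u)
              Filter.atTop :=
          MeasureTheory.lintegral_liminf_le (fun k => Ifun_measurable (n k) _)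
      _ = Filter.liminf (fun k =>
            ENNReal.ofReal (Srec q (n k) (fun z => h k (extP z)) s - b)) Filter.atTop := by
          congr 1
          funext k
          rw [Ifun_lintegral hqpos hqsum (n k) _ (fun z => by have := hhb k (extP z); linarith)]
          rw [Srec_sub_const hqsum b (n k) _ s]
  -- conclude
  apply limsup_transfer (fun k => le_Vrec_of_le (fun z _ _ => hhb k _))
  refine hchain.trans (Filter.liminf_le_liminf (Filter.Eventually.of_forall (fun k => ?_)))
  apply ENNReal.ofReal_le_ofReal
  have h9 := Srec_le_Vrec hqpos hqle (n k) (fun z => h k (extP z)) s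
  linarith

end KeyMain


section P5

variable {Q : UpperExpTree X}

/-- P5 for `Emod`. -/
lemma Emod_p5 (s : List X) (fn : ℕ → Path X → EReal) (f : Path X → EReal)
    (hfin : ∀ k, IsFinGamble (fn k))
    (hub : ∃ B : ℝ, ∀ k ω, (B : EReal) ≤ fn k ω)
    (hconv : ∀ ω, Filter.Tendsto (fun k => fn k ω) Filter.atTop (nhds (f ω))) :
    Emod Q f s ≤ Filter.limsup (fun k => Emod Q (fn k) s) Filter.atTop := by
  obtain ⟨B₀, hB₀⟩ := hub
  have hsel : ∀ k, ∃ (n : ℕ) (B : ℝ), NMeas n (fn k) ∧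
      ∀ ω, -(B : EReal) ≤ fn k ω ∧ fn k ω ≤ (B : EReal) := by
    intro k
    obtain ⟨⟨n, hn⟩, ⟨B, hB⟩⟩ := hfin k
    exact ⟨n, B, hn, hB⟩
  choose nk Bk hnk hBk using hsel
  have hR : ∀ k, Emod Q (fn k) s = ((Wproc Q (fn k) (nk k) s : ℝ) : EReal) :=
    fun k => Emod_finitary (hnk k) (hBk k) s
  refine le_trans (iInf_le _ B₀) ?_
  apply iSup₂_le
  intro m c
  set g : List X → ℝ := termF f B₀ c with hg
  set b : ℝ := min B₀ c with hb
  have hgb : ∀ z, b ≤ g z := fun z => min_le_clamp B₀ c _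
  set h : ℕ → Path X → ℝ := fun k ω => clamp B₀ c (fn k ω) with hh
  have hmeas : ∀ k (ω ω' : Path X),
      prefixList ω (nk k) = prefixList ω' (nk k) → h k ω = h k ω' := by
    intro k ω ω' hp
    simp only [hh]
    rw [hnk k ω ω' hp]
  have hhb : ∀ k ω, b ≤ h k ω := fun k ω => min_le_clamp B₀ c _
  have hptw : ∀ ω ∈ cyl s, ((g (prefixList ω (s.length + m)) : ℝ) : EReal)
      ≤ Filter.liminf (fun k => ((h k ω : ℝ) : EReal)) Filter.atTop := by
    intro ω hω
    have h1 : einf f (prefixList ω (s.length + m)) ≤ f ω := einf_le (self_mem_cyl ω _)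
    have h2 : g (prefixList ω (s.length + m)) ≤ clamp B₀ c (f ω) := clamp_mono B₀ c h1
    have h3 : Filter.Tendsto (fun k => ((h k ω : ℝ) : EReal)) Filter.atTop
        (nhds ((clamp B₀ c (f ω) : ℝ) : EReal)) := by
      rw [EReal.tendsto_coe]
      exact clamp_tendsto (hconv ω)
    rw [h3.liminf_eq]
    exact_mod_cast h2
  have hkey := key_fatou Q s m g b hgb h nk hmeas hhb hptw
  refine hkey.trans ?_
  have hcmp : ∀ k, ((Vrec Q (nk k) (fun z => h k (extP z)) s : ℝ) : EReal)
      ≤ Emod Q (fn k) s := by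
    intro k
    rw [hR k]
    have h4 : Vrec Q (nk k) (fun z => h k (extP z)) s ≤ Vrec Q (nk k) (fval (fn k)) s := by
      apply Vrec_mono
      intro z _ _
      simp only [hh]
      exact clamp_le_toReal (hB₀ k (extP z)) (f_ne_top (hBk k) _) (f_ne_bot (hBk k) _)
    rw [Vrec_fval_collapse (hnk k) (hBk k) (Nat.sub_le _ _)] at h4
    exact_mod_cast h4
  exact Filter.limsup_le_limsup (Filter.Eventually.of_forall hcmp)

/-- `Emod` satisfies all the axioms. -/
lemma Emod_axioms (Q : UpperExpTree X) : Axioms Q (Emod Q) where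
  p1 := Emod_p1
  p2 := fun f _ s => Emod_indicator f s
  p3 := Emod_p3
  p4 := fun f g h s => Emod_mono h s
  p5 := fun s fn f h1 h2 h3 => Emod_p5 s fn f h1 h2 h3

end P5

end Aux
theorem stmt0 (Q : UpperExpTree X) :
    ∃ Estar : (Path X → EReal) → List X → EReal, Axioms Q Estar ∧
      ∀ E : (Path X → EReal) → List X → EReal, Axioms Q E →
        ∀ (f : Path X → EReal) (s : List X), E f s ≤ Estar f s := by
  refine ⟨fun f s => ⨆ (E : (Path X → EReal) → List X → EReal) (_ : Axioms Q E), E f s,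
    ⟨?_, ?_, ?_, ?_, ?_⟩, ?_⟩
  · -- P1
    intro f s
    apply le_antisymm
    · exact iSup₂_le (fun E hE => (hE.p1 f s).le)
    · exact le_iSup₂_of_le (Emod Q) (Emod_axioms Q) (Emod_p1 f s).ge
  · -- P2
    intro f hf s
    apply le_antisymm
    · exact iSup₂_le (fun E hE => (hE.p2 f hf s).le.trans
        (le_iSup₂ (f := fun E (_ : Axioms Q E) => E ((cyl s).indicator f) s) E hE))
    · exact iSup₂_le (fun E hE => (hE.p2 f hf s).ge.trans
        (le_iSup₂ (f := fun E (_ : Axioms Q E) => E f s) E hE))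
  · -- P3
    intro f hf s
    apply iSup₂_le
    intro E hE
    refine (hE.p3 f hf s).trans ?_
    refine le_trans (hE.p4 _ _ (fun ω => ?_) s)
      (le_iSup₂ (f := fun E (_ : Axioms Q E) =>
        E (fun ω => ⨆ (E' : (Path X → EReal) → List X → EReal) (_ : Axioms Q E'),
          E' f (prefixList ω (s.length + 1))) s) E hE)
    exact le_iSup₂ (f := fun E (_ : Axioms Q E) => E f (prefixList ω (s.length + 1))) E hE
  · -- P4
    intro f g h s
    exact iSup₂_mono (fun E hE => hE.p4 f g h s)
  · -- P5
    intro s fn f h1 h2 h3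
    apply iSup₂_le
    intro E hE
    refine (hE.p5 s fn f h1 h2 h3).trans ?_
    exact Filter.limsup_le_limsup (Filter.Eventually.of_forall (fun k =>
      le_iSup₂ (f := fun E (_ : Axioms Q E) => E (fn k) s) E hE))
  · -- maximality
    intro E hE f s
    exact le_iSup₂ (f := fun E (_ : Axioms Q E) => E f s) E hE

end UEPaper
end

section
/- For every imprecise probability tree 𝒫, every situation s, and every pointwise nondecreasing sequence (f_n) of bounded-below global variables f_n: Ω → ℝ̄ with pointwise limit f = sup_n f_n, one has lim_{n→∞} Ē_𝒫(f_n|s) = Ē_𝒫(f|s). -/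
open Filter MeasureTheory Topology
open scoped ENNReal

namespace UEPaper

variable {X : Type} [Fintype X] [Nonempty X] [DecidableEq X]

/-! ### Auxiliary lemmas for Statement 2 -/

section Stmt2Aux

lemma uePosPart_coe (r : ℝ) : posPart (r : EReal) = ENNReal.ofReal r := by
  simp [posPart, EReal.coe_ne_top]

lemma uePosPart_mono : Monotone (posPart) := by
  intro x y hxy
  by_cases hy : y = ⊤
  · rw [hy]
    simp only [posPart, if_pos rfl]
    exact le_top
  · have hx : x ≠ ⊤ := fun h => hy (top_le_iff.mp (h ▸ hxy))
    simp only [posPart, hx, hy, if_false]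
    by_cases hxb : x = ⊥
    · simp [hxb]
    · exact ENNReal.ofReal_le_ofReal (EReal.toReal_le_toReal hxy hxb hy)

lemma ueMeasurablePosPart : Measurable (posPart) :=
  uePosPart_mono.measurable

lemma uePosPart_iSup (a : ℕ → EReal) :
    posPart (⨆ n, a n) = ⨆ n, posPart (a n) := by
  refine le_antisymm ?_ (iSup_le fun n => uePosPart_mono (le_iSup a n))
  set T := ⨆ n, posPart (a n) with hT
  by_cases htop : (⨆ n, a n) = ⊤
  · rw [htop]
    simp only [posPart, if_pos rfl]
    by_contra hlt
    have hTne : T ≠ ⊤ := fun h => hlt (h ▸ le_rfl)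
    obtain ⟨n, hn⟩ : ∃ n, ((T.toReal + 1 : ℝ) : EReal) < a n := by
      rw [← lt_iSup_iff, htop]; exact EReal.coe_lt_top _
    have h1 : ENNReal.ofReal (T.toReal + 1) ≤ posPart (a n) := by
      rw [← uePosPart_coe]
      exact uePosPart_mono hn.le
    have h2 : ENNReal.ofReal (T.toReal + 1) ≤ T := by
      rw [hT]; exact h1.trans (le_iSup (fun m => posPart (a m)) n)
    rw [ENNReal.ofReal_le_iff_le_toReal hTne] at h2
    linarith
  · by_cases hTtop : T = ⊤
    · simp [hTtop]
    set s := ⨆ n, a n with hs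
    have hps : posPart s = ENNReal.ofReal s.toReal := by
      simp [posPart, htop]
    rw [hps]
    by_cases hpos : s.toReal ≤ 0
    · simpa using ENNReal.ofReal_le_ofReal hpos |>.trans (by simp)
    push_neg at hpos
    have hsb : s ≠ ⊥ := by
      intro h
      rw [h] at hpos; simp at hpos
    refine ENNReal.le_of_forall_pos_le_add fun ε hε _ => ?_
    obtain ⟨n, hn⟩ : ∃ n, ((s.toReal - ε : ℝ) : EReal) < a n := by
      rw [← lt_iSup_iff, ← hs]
      have : s = ((s.toReal : ℝ) : EReal) := by
        rw [EReal.coe_toReal htop hsb]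
      rw [this]
      exact_mod_cast sub_lt_self (s.toReal) (by exact_mod_cast hε)
    have h1 : ENNReal.ofReal (s.toReal - ε) ≤ T := by
      rw [← uePosPart_coe, hT]
      exact (uePosPart_mono hn.le).trans (le_iSup (fun m => posPart (a m)) n)
    calc ENNReal.ofReal s.toReal = ENNReal.ofReal ((s.toReal - ε) + ε) := by ring_nf
      _ ≤ ENNReal.ofReal (s.toReal - ε) + ENNReal.ofReal ε := ENNReal.ofReal_add_le
      _ ≤ T + ε := by
          gcongr
          simp [ENNReal.ofReal_coe_nnreal]

lemma ereal_iSup_sub_const (a : ℕ → EReal) (c : ℝ) :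
    (⨆ n, a n) - (c : EReal) = ⨆ n, (a n - (c : EReal)) := by
  refine le_antisymm ?_ (iSup_le fun n => ?_)
  · rw [EReal.sub_le_iff_le_add (Or.inl (EReal.coe_ne_bot c)) (Or.inl (EReal.coe_ne_top c))]
    refine iSup_le fun n => ?_
    calc a n = (a n - (c : EReal)) + c := EReal.sub_add_cancel.symm
      _ ≤ (⨆ m, (a m - (c : EReal))) + c := add_le_add_left (le_iSup (fun m => a m - (c : EReal)) n) (c : EReal)
  · rw [EReal.sub_le_iff_le_add (Or.inl (EReal.coe_ne_bot c)) (Or.inl (EReal.coe_ne_top c)),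
      EReal.sub_add_cancel]
    exact le_iSup a n

lemma ereal_iSup_add_const (a : ℕ → EReal) (c : ℝ) :
    (⨆ n, a n) + (c : EReal) = ⨆ n, (a n + (c : EReal)) := by
  have := ereal_iSup_sub_const a (-c)
  simpa [sub_eq_add_neg] using this

lemma posPart_sub_coe {B : ℝ} (hB : B ≤ 0) {x : EReal} (hx : (B : EReal) ≤ x) :
    posPart (x - (B : EReal)) =
      posPart x + (ENNReal.ofReal (-B) - posPart (-x)) := by
  induction x with
  | bot => exact absurd hx (by simp)
  | coe r =>
    have hBr : B ≤ r := by exact_mod_cast hx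
    rw [show ((r : EReal) - (B : EReal)) = ((r - B : ℝ) : EReal) by norm_cast,
      show (-(r : EReal)) = ((-r : ℝ) : EReal) by norm_cast,
      uePosPart_coe, uePosPart_coe, uePosPart_coe]
    rcases le_or_gt 0 r with hr | hr
    · rw [ENNReal.ofReal_of_nonpos (show -r ≤ 0 by linarith), tsub_zero,
        show (r:ℝ) - B = r + -B from by ring,
        ENNReal.ofReal_add hr (show (0:ℝ) ≤ -B by linarith)]
    · rw [ENNReal.ofReal_of_nonpos hr.le, zero_add,
        show (r:ℝ) - B = -B - -r from by ring,
        ENNReal.ofReal_sub _ (show (0:ℝ) ≤ -r by linarith)]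
  | top =>
    rw [show ((⊤ : EReal) - (B : EReal)) = ⊤ from EReal.top_sub_coe B]
    simp [posPart]

lemma integralE_shift (μ : Measure (Path X)) [IsProbabilityMeasure μ] {B : ℝ} (hB : B ≤ 0)
    {g : Path X → EReal} (hgm : Measurable g) (hg : ∀ ω, (B : EReal) ≤ g ω) :
    integralE μ g =
      ((∫⁻ ω, posPart (g ω - (B : EReal)) ∂μ : ℝ≥0∞) : EReal) + (B : EReal) := by
  set A : ℝ≥0∞ := ∫⁻ ω, posPart (g ω) ∂μ with hA
  set D : ℝ≥0∞ := ∫⁻ ω, posPart (-(g ω)) ∂μ with hD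
  set C : ℝ≥0∞ := ENNReal.ofReal (-B) with hC
  have hCne : C ≠ ⊤ := ENNReal.ofReal_ne_top
  have hmeasD : Measurable fun ω => posPart (-(g ω)) := by
    have hanti : Antitone fun x : EReal => posPart (-x) :=
      fun x y hxy => uePosPart_mono (EReal.neg_le_neg_iff.mpr hxy)
    exact hanti.measurable.comp hgm
  have hmeasA : Measurable fun ω => posPart (g ω) :=
    ueMeasurablePosPart.comp hgm
  have hDleC : ∀ ω, posPart (-(g ω)) ≤ C := by
    intro ω
    have : -(g ω) ≤ ((-B : ℝ) : EReal) := by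
      rw [show ((-B : ℝ) : EReal) = -(B : EReal) by norm_cast]
      exact EReal.neg_le_neg_iff.mpr (hg ω)
    calc posPart (-(g ω)) ≤ posPart ((-B : ℝ) : EReal) := uePosPart_mono this
      _ = C := uePosPart_coe _
  have hDle : D ≤ C := by
    calc D ≤ ∫⁻ _, C ∂μ := lintegral_mono hDleC
      _ = C := by simp
  have hDne : D ≠ ⊤ := fun h => hCne (top_le_iff.mp (h ▸ hDle))
  have hlint : (∫⁻ ω, posPart (g ω - (B : EReal)) ∂μ) = A + (C - D) := by
    have hpt : ∀ ω, posPart (g ω - (B : EReal)) =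
        posPart (g ω) + (C - posPart (-(g ω))) := fun ω =>
      posPart_sub_coe hB (hg ω)
    rw [lintegral_congr hpt, lintegral_add_left hmeasA]
    congr 1
    rw [lintegral_sub hmeasD hDne (Filter.Eventually.of_forall hDleC)]
    simp
    rfl
  rw [hlint]
  show (A : EReal) - (D : EReal) = ((A + (C - D) : ℝ≥0∞) : EReal) + (B : EReal)
  by_cases hAtop : A = ⊤
  · rw [hAtop]
    have hDne' : ((D : ℝ≥0∞) : EReal) ≠ ⊤ := by
      simp [EReal.coe_ennreal_eq_top_iff, hDne]
    rw [show (⊤ : ℝ≥0∞) + (C - D) = ⊤ from top_add _, EReal.coe_ennreal_top,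
      EReal.top_add_of_ne_bot (EReal.coe_ne_bot B), sub_eq_add_neg,
      EReal.top_add_of_ne_bot]
    simp only [ne_eq, EReal.neg_eq_bot_iff]
    exact hDne'
  · have hsum_ne : A + (C - D) ≠ ⊤ := by
      refine ENNReal.add_ne_top.mpr ⟨hAtop, ?_⟩
      exact fun h => hCne (top_le_iff.mp (h ▸ tsub_le_self))
    rw [← EReal.coe_toReal (x := ((A : ℝ≥0∞) : EReal)) (by simp only [ne_eq, EReal.coe_ennreal_eq_top_iff]; exact hAtop) (EReal.coe_ennreal_ne_bot _),
      ← EReal.coe_toReal (x := ((D : ℝ≥0∞) : EReal)) (by simp only [ne_eq, EReal.coe_ennreal_eq_top_iff]; exact hDne) (EReal.coe_ennreal_ne_bot _),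
      ← EReal.coe_toReal (x := ((A + (C - D) : ℝ≥0∞) : EReal)) (by simp only [ne_eq, EReal.coe_ennreal_eq_top_iff]; exact hsum_ne)
        (EReal.coe_ennreal_ne_bot _)]
    rw [EReal.toReal_coe_ennreal, EReal.toReal_coe_ennreal, EReal.toReal_coe_ennreal]
    have h1 : (A + (C - D)).toReal = A.toReal + (C.toReal - D.toReal) := by
      rw [ENNReal.toReal_add hAtop (fun h => hCne (top_le_iff.mp (h ▸ tsub_le_self))),
        ENNReal.toReal_sub_of_le hDle hCne]
    have h2 : C.toReal = -B := ENNReal.toReal_ofReal (by linarith)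
    rw [h1, h2]
    norm_cast
    ring

lemma integralE_mono_of_le (μ : Measure (Path X)) [IsProbabilityMeasure μ] {B : ℝ} (hB : B ≤ 0)
    {g₁ g₂ : Path X → EReal} (h1m : Measurable g₁) (h2m : Measurable g₂)
    (h1 : ∀ ω, (B : EReal) ≤ g₁ ω) (hle : ∀ ω, g₁ ω ≤ g₂ ω) :
    integralE μ g₁ ≤ integralE μ g₂ := by
  have h2 : ∀ ω, (B : EReal) ≤ g₂ ω := fun ω => (h1 ω).trans (hle ω)
  rw [integralE_shift μ hB h1m h1, integralE_shift μ hB h2m h2]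
  refine add_le_add_left ?_ _
  rw [EReal.coe_ennreal_le_coe_ennreal_iff]
  refine lintegral_mono fun ω => uePosPart_mono ?_
  exact EReal.sub_le_sub (hle ω) le_rfl

lemma integralE_iSup (μ : Measure (Path X)) [IsProbabilityMeasure μ] {B : ℝ} (hB : B ≤ 0)
    (h : ℕ → Path X → EReal) (hm : ∀ n, Measurable (h n))
    (hmono : ∀ n ω, h n ω ≤ h (n + 1) ω) (hbd : ∀ n ω, (B : EReal) ≤ h n ω) :
    integralE μ (fun ω => ⨆ n, h n ω) = ⨆ n, integralE μ (h n) := by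
  have hmono' : ∀ {m n : ℕ}, m ≤ n → ∀ ω, h m ω ≤ h n ω := by
    intro m n hmn
    induction n, hmn using Nat.le_induction with
    | base => exact fun ω => le_rfl
    | succ n hmn ih => exact fun ω => (ih ω).trans (hmono n ω)
  have hsm : Measurable fun ω => ⨆ n, h n ω := Measurable.iSup hm
  have hsbd : ∀ ω, (B : EReal) ≤ ⨆ n, h n ω := fun ω => (hbd 0 ω).trans (le_iSup (fun n => h n ω) 0)
  rw [integralE_shift μ hB hsm hsbd]
  have hpt : ∀ ω, posPart ((⨆ n, h n ω) - (B : EReal)) =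
      ⨆ n, posPart (h n ω - (B : EReal)) := by
    intro ω
    rw [ereal_iSup_sub_const, uePosPart_iSup]
  have hmeas : ∀ n, Measurable fun ω => posPart (h n ω - (B : EReal)) := by
    intro n
    have hmono2 : Monotone fun x : EReal => posPart (x - (B : EReal)) :=
      fun x y hxy => uePosPart_mono (EReal.sub_le_sub hxy le_rfl)
    exact hmono2.measurable.comp (hm n)
  have hmono3 : Monotone fun n => fun ω => posPart (h n ω - (B : EReal)) := by
    refine monotone_nat_of_le_succ fun n ω => ?_
    exact uePosPart_mono (EReal.sub_le_sub (hmono n ω) le_rfl)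
  rw [lintegral_congr hpt, lintegral_iSup hmeas hmono3]
  have hcoe : ((⨆ n, ∫⁻ ω, posPart (h n ω - (B : EReal)) ∂μ : ℝ≥0∞) : EReal) =
      ⨆ n, ((∫⁻ ω, posPart (h n ω - (B : EReal)) ∂μ : ℝ≥0∞) : EReal) := by
    refine Monotone.map_ciSup_of_continuousAt ?_ ?_ ?_
    · exact continuous_coe_ennreal_ereal.continuousAt
    · exact fun x y hxy => EReal.coe_ennreal_le_coe_ennreal_iff.mpr hxy
    · exact OrderTop.bddAbove _
  rw [hcoe, ereal_iSup_add_const]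
  refine iSup_congr fun n => ?_
  rw [integralE_shift μ hB (hm n) (hbd n)]

lemma upperInt_mono (μ : Measure (Path X)) {f g : Path X → EReal}
    (h : ∀ ω, f ω ≤ g ω) : upperInt μ f ≤ upperInt μ g := by
  refine sInf_le_sInf fun a ha => ?_
  obtain ⟨G, hGm, hGb, hGd, rfl⟩ := ha
  exact ⟨G, hGm, hGb, fun ω => (h ω).trans (hGd ω), rfl⟩

lemma le_upperInt (μ : Measure (Path X)) [IsProbabilityMeasure μ] {B : ℝ} (hB : B ≤ 0)
    {f : Path X → EReal} (hf : ∀ ω, (B : EReal) ≤ f ω) :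
    (B : EReal) ≤ upperInt μ f := by
  refine le_sInf fun a ha => ?_
  obtain ⟨G, hGm, hGb, hGd, rfl⟩ := ha
  have hGB : ∀ ω, (B : EReal) ≤ G ω := fun ω => (hf ω).trans (hGd ω)
  rw [integralE_shift μ hB hGm hGB]
  calc (B : EReal) = 0 + (B : EReal) := (zero_add _).symm
    _ ≤ _ := add_le_add_left (EReal.coe_ennreal_nonneg _) _

lemma upperInt_iSup (μ : Measure (Path X)) [IsProbabilityMeasure μ] {B : ℝ} (hB : B ≤ 0)
    (fn : ℕ → Path X → EReal) (hmono : Monotone fn)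
    (hbb : ∀ n ω, (B : EReal) ≤ fn n ω) :
    upperInt μ (fun ω => ⨆ n, fn n ω) = ⨆ n, upperInt μ (fn n) := by
  refine le_antisymm ?_ (iSup_le fun n => upperInt_mono μ fun ω => le_iSup (fun m => fn m ω) n)
  set S : EReal := ⨆ n, upperInt μ (fn n) with hS
  have hSbot : (B : EReal) ≤ S := by
    rw [hS]
    exact (le_upperInt μ hB (hbb 0)).trans (le_iSup (fun n => upperInt μ (fn n)) 0)
  by_cases hStop : S = ⊤
  · rw [hStop]; exact le_top
  have hSne : S ≠ ⊥ := fun h => by simp [h] at hSbot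
  obtain ⟨Sr, hSr⟩ : ∃ r : ℝ, S = (r : EReal) := ⟨S.toReal, (EReal.coe_toReal hStop hSne).symm⟩
  have key : ∀ ε : ℝ, 0 < ε → upperInt μ (fun ω => ⨆ n, fn n ω) ≤ ((Sr + ε : ℝ) : EReal) := by
    intro ε hε
    have hlt : ∀ n, upperInt μ (fn n) < ((Sr + ε : ℝ) : EReal) := by
      intro n
      calc upperInt μ (fn n) ≤ S := by
            rw [hS]; exact le_iSup (fun m => upperInt μ (fn m)) n
        _ < _ := by rw [hSr]; exact_mod_cast lt_add_of_pos_right Sr hε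
    have H : ∀ n, ∃ g : Path X → EReal, Measurable g ∧ (∀ ω, fn n ω ≤ g ω) ∧
        integralE μ g < ((Sr + ε : ℝ) : EReal) := by
      intro n
      obtain ⟨a, ha, halt⟩ := sInf_lt_iff.mp (hlt n)
      obtain ⟨g, hgm, _, hgd, rfl⟩ := ha
      exact ⟨g, hgm, hgd, halt⟩
    choose g hgm hgf hglt using H
    have hgB : ∀ n ω, (B : EReal) ≤ g n ω := fun n ω => (hbb n ω).trans (hgf n ω)
    set h : ℕ → Path X → EReal := fun n ω => ⨅ m, g (n + m) ω with hh
    have hhm : ∀ n, Measurable (h n) := fun n => Measurable.iInf fun m => hgm (n + m)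
    have hhB : ∀ n ω, (B : EReal) ≤ h n ω := fun n ω => le_iInf fun m => hgB (n + m) ω
    have hhf : ∀ n ω, fn n ω ≤ h n ω := fun n ω =>
      le_iInf fun m => ((hmono (Nat.le_add_right n m)) ω).trans (hgf (n + m) ω)
    have hhg : ∀ n ω, h n ω ≤ g n ω := fun n ω => by
      simpa using iInf_le (fun m => g (n + m) ω) 0
    have hhmono : ∀ n ω, h n ω ≤ h (n + 1) ω := by
      intro n ω
      refine le_iInf fun m => ?_
      have : n + 1 + m = n + (m + 1) := by ring
      rw [this]
      exact iInf_le (fun m => g (n + m) ω) (m + 1)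
    have hint : upperInt μ (fun ω => ⨆ n, fn n ω) ≤ integralE μ (fun ω => ⨆ n, h n ω) := by
      refine sInf_le ?_
      refine ⟨fun ω => ⨆ n, h n ω, Measurable.iSup hhm, ⟨B, fun ω => (hhB 0 ω).trans
        (le_iSup (fun n => h n ω) 0)⟩, fun ω => iSup_le fun n => (hhf n ω).trans (le_iSup (fun m => h m ω) n), rfl⟩
    have heq : integralE μ (fun ω => ⨆ n, h n ω) = ⨆ n, integralE μ (h n) :=
      integralE_iSup μ hB h hhm hhmono hhB
    have hle2 : ∀ n, integralE μ (h n) ≤ integralE μ (g n) := fun n =>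
      integralE_mono_of_le μ hB (hhm n) (hgm n) (hhB n) (hhg n)
    calc upperInt μ (fun ω => ⨆ n, fn n ω) ≤ ⨆ n, integralE μ (h n) := heq ▸ hint
      _ ≤ ((Sr + ε : ℝ) : EReal) := iSup_le fun n => ((hle2 n).trans (hglt n).le)
  rw [hSr]
  set u := upperInt μ (fun ω => ⨆ n, fn n ω) with hu
  by_contra hcon
  push_neg at hcon
  have hune : u ≠ ⊤ := fun h => by
    have := key 1 one_pos
    rw [h] at this
    exact absurd (top_le_iff.mp this) (EReal.coe_ne_top _)
  have hunb : u ≠ ⊥ := fun h => by simp [h] at hcon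
  obtain ⟨ur, hur⟩ : ∃ r : ℝ, u = (r : EReal) := ⟨u.toReal, (EReal.coe_toReal hune hunb).symm⟩
  rw [hur] at hcon key
  have hlt : Sr < ur := by exact_mod_cast hcon
  have := key ((ur - Sr) / 2) (by linarith)
  have : ur ≤ Sr + (ur - Sr) / 2 := by exact_mod_cast this
  linarith

end Stmt2Aux

theorem stmt2 (P : ImpreciseTree X)
    (Pm : PreciseTree X → List X → Measure (Path X))
    (hPm : ∀ (p : PreciseTree X) (s : List X), IsTreeMeasure p s (Pm p s))
    (s : List X) (fn : ℕ → Path X → EReal) (f : Path X → EReal)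
    (hmono : Monotone fn)
    (hbb : ∀ n, ∃ B : ℝ, ∀ ω, (B : EReal) ≤ fn n ω)
    (hlim : ∀ ω, f ω = ⨆ n, fn n ω) :
    Tendsto (fun n => muUE Pm P (fn n) s) atTop (nhds (muUE Pm P f s)) := by
  obtain ⟨B₀, hB₀⟩ := hbb 0
  set B : ℝ := min B₀ 0 with hBdef
  have hB : B ≤ 0 := min_le_right _ _
  have hbbB : ∀ n ω, (B : EReal) ≤ fn n ω := by
    intro n ω
    calc (B : EReal) ≤ (B₀ : EReal) := by exact_mod_cast min_le_left _ _
      _ ≤ fn 0 ω := hB₀ ω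
      _ ≤ fn n ω := hmono (Nat.zero_le n) ω
  have hf : f = fun ω => ⨆ n, fn n ω := funext hlim
  have hkey : ∀ p : PreciseTree X, Compatible p P →
      upperInt (Pm p s) f = ⨆ n, upperInt (Pm p s) (fn n) := by
    intro p _
    have : IsProbabilityMeasure (Pm p s) := (hPm p s).1
    rw [hf]
    exact upperInt_iSup (Pm p s) hB fn hmono hbbB
  have hsup : muUE Pm P f s = ⨆ n, muUE Pm P (fn n) s := by
    unfold muUE
    calc (⨆ p, ⨆ (_ : Compatible p P), upperInt (Pm p s) f)
        = ⨆ p, ⨆ (_ : Compatible p P), ⨆ n, upperInt (Pm p s) (fn n) :=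
          iSup_congr fun p => iSup_congr fun hc => hkey p hc
      _ = ⨆ p, ⨆ n, ⨆ (_ : Compatible p P), upperInt (Pm p s) (fn n) :=
          iSup_congr fun p => iSup_comm
      _ = ⨆ n, ⨆ p, ⨆ (_ : Compatible p P), upperInt (Pm p s) (fn n) := iSup_comm
  have hmonoUE : Monotone fun n => muUE Pm P (fn n) s := by
    intro m n hmn
    refine iSup_mono fun p => iSup_mono fun _ => ?_
    exact upperInt_mono _ (hmono hmn)
  rw [hsup]
  exact tendsto_atTop_iSup hmonoUE

end UEPaper
end
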